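/- arXiv:2507.22284 — 5 statements merged into one kernel-verified Lean document; each statement's English description precedes it below -/
import Mathlib

section
/- Let S be a k-dimensional simplex in R^d and let x, y be points such that the affine hull H of S ∪ {x,y} is (k+1)-dimensional and x, y lie in the same connected component of H minus the affine hull of S. Then the relative interiors of conv(S ∪ {x}) and conv(S ∪ {y}) intersect. -/
open RealInnerProductSpace

noncomputable section

abbrev Euc (d : ℕ) := EuclideanSpace ℝ (Fin d)

/-- A polytope is the convex hull of a finite set of points. -/
def IsPolytope {d : ℕ} (P : Set (Euc d)) : Prop :=
  ∃ V : Set (Euc d), V.Finite ∧ P = convexHull ℝ V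

/-- The dimension of a subset: the rank of its vector span (direction of its affine hull). -/
noncomputable def sdim {d : ℕ} (F : Set (Euc d)) : ℕ :=
  Module.finrank ℝ (vectorSpan ℝ F)

/-- A full flag of a `k`-dimensional polytope `P`: a chain of nonempty faces,
one in each dimension `0, …, k-1`.  For indices `≥ k` the face is `P` itself by convention. -/
structure FullFlag {d : ℕ} (P : Set (Euc d)) (k : ℕ) where
  face : ℕ → Set (Euc d)
  exposed : ∀ i < k, IsExposed ℝ P (face i)
  nonempty : ∀ i < k, (face i).Nonempty
  dim_eq : ∀ i < k, sdim (face i) = i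
  chain : ∀ i j : ℕ, i < j → j < k → face i ⊆ face j
  top : ∀ i, k ≤ i → face i = P

lemma my_range_snoc {α : Type*} {n : ℕ} (p : Fin n → α) (x : α) :
    Set.range (Fin.snoc p x : Fin (n+1) → α) = Set.range p ∪ {x} := by
  ext z
  constructor
  · rintro ⟨i, rfl⟩
    induction i using Fin.lastCases with
    | last => simp
    | cast i => left; exact ⟨i, by simp⟩
  · rintro (⟨i, rfl⟩ | rfl)
    · exact ⟨i.castSucc, by simp⟩
    · exact ⟨Fin.last n, by simp⟩

lemma snoc_affineIndependent {d n : ℕ} {p : Fin (n+1) → Euc d} (hp : AffineIndependent ℝ p)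
    {x : Euc d} (hx : x ∉ affineSpan ℝ (Set.range p)) :
    AffineIndependent ℝ (Fin.snoc p x : Fin (n+2) → Euc d) := by
  apply AffineIndependent.affineIndependent_of_notMem_span (i := Fin.last (n+1))
  · rw [← affineIndependent_equiv (finSuccAboveEquiv (Fin.last (n+1)))]
    convert hp using 1
    · rfl
    funext i
    simp [finSuccAboveEquiv_apply, Fin.succAbove_last_apply]
  · have himg : (Fin.snoc p x : Fin (n+2) → Euc d) '' {j | j ≠ Fin.last (n+1)} = Set.range p := by
      ext z
      constructor
      · rintro ⟨j, hj, rfl⟩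
        obtain ⟨j', rfl⟩ := Fin.exists_castSucc_eq.mpr hj
        exact ⟨j', by simp⟩
      · rintro ⟨j, rfl⟩
        exact ⟨j.castSucc, by simp [Fin.ne_of_lt (Fin.castSucc_lt_last j)], by simp⟩
    rw [himg]
    simpa using hx




lemma mem_intrinsicInterior_simplex {d n : ℕ} {q : Fin (n+1) → Euc d}
    (hq : AffineIndependent ℝ q) {w : Fin (n+1) → ℝ} (hw : ∀ i, 0 < w i)
    (hw1 : ∑ i, w i = 1) :
    (∑ i, w i • q i) ∈ intrinsicInterior ℝ (convexHull ℝ (Set.range q)) := by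
  classical
  have hmem : ∀ i, q i - q 0 ∈ vectorSpan ℝ (Set.range q) := fun i =>
    vsub_mem_vectorSpan ℝ (Set.mem_range_self i) (Set.mem_range_self 0)
  set q' : Fin (n+1) → (vectorSpan ℝ (Set.range q)) := fun i => ⟨q i - q 0, hmem i⟩ with hq'def
  -- q' is affinely independent
  have hsub : AffineIndependent ℝ (fun i => q i - q 0) := by
    have he : (fun i => q i - q 0) =
        (AffineEquiv.constVAdd ℝ (Euc d) (-(q 0))) ∘ q := by
      funext i
      show q i - q 0 = -(q 0) +ᵥ q i
      rw [vadd_eq_add, neg_add_eq_sub]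
    rw [he, (AffineEquiv.constVAdd ℝ (Euc d) (-(q 0))).affineIndependent_iff]
    exact hq
  have hq' : AffineIndependent ℝ q' := by
    apply AffineIndependent.of_comp (vectorSpan ℝ (Set.range q)).subtype.toAffineMap
    exact hsub
  have hfr : Module.finrank ℝ (vectorSpan ℝ (Set.range q)) = n :=
    hq.finrank_vectorSpan (Fintype.card_fin _)
  have htot : affineSpan ℝ (Set.range q') = ⊤ := by
    rw [hq'.affineSpan_eq_top_iff_card_eq_finrank_add_one]
    rw [Fintype.card_fin, hfr]
  let b : AffineBasis (Fin (n+1)) ℝ (vectorSpan ℝ (Set.range q)) := ⟨q', hq', htot⟩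
  -- the candidate point inside V
  have hzmem : (∑ i, w i • q i) - q 0 ∈ vectorSpan ℝ (Set.range q) := by
    have : (∑ i, w i • q i) - q 0 = ∑ i, w i • (q i - q 0) := by
      rw [Finset.sum_congr rfl (fun i _ => smul_sub (w i) (q i) (q 0)),
        Finset.sum_sub_distrib, ← Finset.sum_smul, hw1, one_smul]
    rw [this]
    exact Submodule.sum_mem _ fun i _ => Submodule.smul_mem _ _ (hmem i)
  set z' : (vectorSpan ℝ (Set.range q)) := ⟨(∑ i, w i • q i) - q 0, hzmem⟩ with hz'def
  have hz'comb : z' = Finset.univ.affineCombination ℝ q' w := by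
    rw [Finset.univ.affineCombination_eq_linear_combination q' w hw1]
    apply Subtype.ext
    push_cast
    rw [Finset.sum_congr rfl (fun i _ => smul_sub (w i) (q i) (q 0)),
      Finset.sum_sub_distrib, ← Finset.sum_smul, hw1, one_smul]
  have hcoord : ∀ i, b.coord i z' = w i := by
    intro i
    rw [hz'comb]
    exact b.coord_apply_combination_of_mem (Finset.mem_univ i) hw1
  have hzint : z' ∈ interior (convexHull ℝ (Set.range b)) := by
    rw [b.interior_convexHull]
    intro i
    rw [hcoord i]
    exact hw i
  have hrange : Set.range b = Set.range q' := rfl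
  rw [hrange] at hzint
  have hzint' : z' ∈ intrinsicInterior ℝ (convexHull ℝ (Set.range q')) :=
    interior_subset_intrinsicInterior hzint
  -- transfer via the affine isometry v ↦ q 0 + v
  set φ : (vectorSpan ℝ (Set.range q)) →ᵃⁱ[ℝ] Euc d :=
    ((AffineIsometryEquiv.constVAdd ℝ (Euc d) (q 0)).toAffineIsometry).comp
      (vectorSpan ℝ (Set.range q)).subtypeₗᵢ.toAffineIsometry with hφdef
  have hφq : ∀ i, φ (q' i) = q i := by
    intro i
    show q 0 +ᵥ (q i - q 0) = q i
    rw [vadd_eq_add, add_sub_cancel]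
  have hφz : φ z' = ∑ i, w i • q i := by
    show q 0 +ᵥ ((∑ i, w i • q i) - q 0) = _
    rw [vadd_eq_add, add_sub_cancel]
  have himg : φ '' (convexHull ℝ (Set.range q')) = convexHull ℝ (Set.range q) := by
    rw [show φ '' (convexHull ℝ (Set.range q')) =
      φ.toAffineMap '' (convexHull ℝ (Set.range q')) from rfl]
    rw [AffineMap.image_convexHull]
    congr 1
    rw [← Set.range_comp]
    have hcomp : (⇑φ.toAffineMap ∘ q') = q := funext hφq
    rw [hcomp]
  rw [← himg, AffineIsometry.image_intrinsicInterior]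
  exact ⟨z', hzint', hφz⟩

set_option maxHeartbeats 2000000 in
/-- If `S` is a `k`-dimensional simplex and `x, y` are points such that the affine hull `H` of
`S ∪ {x,y}` is `(k+1)`-dimensional and `x, y` lie in the same connected component of
`H \ aff S`, then the relative interiors of `conv (S ∪ {x})` and `conv (S ∪ {y})` intersect. -/
theorem stmt_0 {d k : ℕ} (p : Fin (k + 1) → Euc d) (hp : AffineIndependent ℝ p)
    (S : Set (Euc d)) (hS : S = convexHull ℝ (Set.range p))
    (x y : Euc d)
    (hdim : Module.finrank ℝ (vectorSpan ℝ (S ∪ {x, y})) = k + 1)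
    (hconn : y ∈ connectedComponentIn
      ((affineSpan ℝ (S ∪ {x, y}) : Set (Euc d)) \ (affineSpan ℝ S : Set (Euc d))) x) :
    (intrinsicInterior ℝ (convexHull ℝ (S ∪ {x})) ∩
      intrinsicInterior ℝ (convexHull ℝ (S ∪ {y}))).Nonempty := by
  classical
  set F : Set (Euc d) :=
    ((affineSpan ℝ (S ∪ {x, y}) : Set (Euc d)) \ (affineSpan ℝ S : Set (Euc d))) with hF
  have hxF : x ∈ F := connectedComponentIn_nonempty_iff.mp ⟨y, hconn⟩
  have hyF : y ∈ F := connectedComponentIn_subset _ _ hconn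
  have hSspan : affineSpan ℝ S = affineSpan ℝ (Set.range p) := by
    rw [hS, affineSpan_convexHull]
  have hpS : Set.range p ⊆ S := hS ▸ subset_convexHull ℝ _
  have hx' : x ∉ affineSpan ℝ (Set.range p) := fun h => hxF.2 (by rw [hSspan]; exact h)
  have hy' : y ∉ affineSpan ℝ (Set.range p) := fun h => hyF.2 (by rw [hSspan]; exact h)
  have hqx : AffineIndependent ℝ (Fin.snoc p x : Fin (k+2) → Euc d) :=
    snoc_affineIndependent hp hx'
  have hqy : AffineIndependent ℝ (Fin.snoc p y : Fin (k+2) → Euc d) :=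
    snoc_affineIndependent hp hy'
  set U : Submodule ℝ (Euc d) := (affineSpan ℝ S).direction with hU
  set W : Submodule ℝ (Euc d) := (affineSpan ℝ (S ∪ {x, y})).direction with hW
  have hfrU : Module.finrank ℝ U = k := by
    rw [hU, hSspan, direction_affineSpan]
    exact hp.finrank_vectorSpan (Fintype.card_fin _)
  have hfrW : Module.finrank ℝ W = k + 1 := by
    rw [hW, direction_affineSpan]; exact hdim
  have hUW : U ≤ W :=
    AffineSubspace.direction_le (affineSpan_mono ℝ Set.subset_union_left)
  -- find a normal vector
  obtain ⟨n0, hn0W, hn0U, hn0ne⟩ : ∃ n0, n0 ∈ W ∧ n0 ∈ Uᗮ ∧ n0 ≠ 0 := by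
    have hnle : ¬ W ≤ U := by
      intro h
      have := Submodule.finrank_mono h
      omega
    obtain ⟨v, hvW, hvU⟩ := SetLike.not_le_iff_exists.mp hnle
    refine ⟨v - (U.orthogonalProjectionOnto v : Euc d),
      Submodule.sub_mem _ hvW (hUW (U.orthogonalProjectionOnto v).2),
      U.sub_starProjection_mem_orthogonal v, ?_⟩
    intro h
    rw [sub_eq_zero] at h
    exact hvU (h ▸ (U.orthogonalProjectionOnto v).2)
  have hn0U' : n0 ∉ U := fun h => hn0ne (by
    have := (Submodule.mem_orthogonal _ _).mp hn0U n0 h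
    rwa [real_inner_self_eq_norm_sq, pow_eq_zero_iff (by norm_num), norm_eq_zero] at this)
  have hsup : U ⊔ (ℝ ∙ n0) = W := by
    apply Submodule.eq_of_le_of_finrank_eq
    · exact sup_le hUW ((Submodule.span_singleton_le_iff_mem _ _).mpr hn0W)
    · have hlt : U < U ⊔ (ℝ ∙ n0) := by
        refine lt_of_le_of_ne le_sup_left (fun h => hn0U' ?_)
        rw [h]
        exact le_sup_right (α := Submodule ℝ (Euc d)) (Submodule.mem_span_singleton_self n0)
      have h1 : Module.finrank ℝ U < Module.finrank ℝ (U ⊔ (ℝ ∙ n0) : Submodule ℝ (Euc d)) :=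
        Submodule.finrank_lt_finrank_of_lt hlt
      have h2 : Module.finrank ℝ (U ⊔ (ℝ ∙ n0) : Submodule ℝ (Euc d)) ≤ Module.finrank ℝ W :=
        Submodule.finrank_mono (sup_le hUW ((Submodule.span_singleton_le_iff_mem _ _).mpr hn0W))
      omega
  -- the side function
  set g : Euc d → ℝ := fun z => ⟪n0, z - p 0⟫ with hg
  have hp0S : p 0 ∈ affineSpan ℝ S := subset_affineSpan ℝ S (hpS (Set.mem_range_self 0))
  have hp0H : p 0 ∈ affineSpan ℝ (S ∪ {x, y}) :=
    subset_affineSpan ℝ _ (Set.mem_union_left _ (hpS (Set.mem_range_self 0)))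
  have ga : ∀ z ∈ affineSpan ℝ S, g z = 0 := by
    intro z hz
    have : z - p 0 ∈ U := AffineSubspace.vsub_mem_direction hz hp0S
    show ⟪n0, z - p 0⟫ = 0
    rw [real_inner_comm]
    exact (Submodule.mem_orthogonal _ _).mp hn0U (z - p 0) this
  have gb : ∀ z ∈ affineSpan ℝ (S ∪ {x, y}), g z = 0 → z ∈ affineSpan ℝ S := by
    intro z hz hgz
    have hzW : z - p 0 ∈ W := AffineSubspace.vsub_mem_direction hz hp0H
    rw [← hsup] at hzW
    obtain ⟨u, hu, v, hv, huv⟩ := Submodule.mem_sup.mp hzW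
    obtain ⟨r, rfl⟩ := Submodule.mem_span_singleton.mp hv
    have hinner : g z = r * (‖n0‖^2) := by
      rw [hg]
      simp only
      rw [← huv, inner_add_right, real_inner_smul_right]
      have hzero : ⟪n0, u⟫ = 0 := by
        rw [real_inner_comm]
        exact (Submodule.mem_orthogonal _ _).mp hn0U u hu
      rw [hzero, real_inner_self_eq_norm_sq]
      ring
    have hr : r = 0 := by
      have : ‖n0‖^2 ≠ 0 := pow_ne_zero _ (norm_ne_zero_iff.mpr hn0ne)
      rw [hinner] at hgz
      exact (mul_eq_zero.mp hgz).resolve_right this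
    have hzu : z - p 0 = u := by rw [← huv, hr, zero_smul, add_zero]
    have : z = u +ᵥ p 0 := by rw [vadd_eq_add, ← hzu, sub_add_cancel]
    rw [this]
    exact AffineSubspace.vadd_mem_of_mem_direction (hzu ▸ hu) hp0S
  have gne : ∀ z ∈ F, g z ≠ 0 := fun z hz hgz => hz.2 (gb z hz.1 hgz)
  have gcont : Continuous g := by
    apply Continuous.inner continuous_const
    exact continuous_id.sub continuous_const
  -- same sign
  have hsign : 0 < g x * g y := by
    set T : Set ℝ := g '' connectedComponentIn F x with hT
    have hpc : IsPreconnected T :=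
      (isPreconnected_connectedComponentIn).image g gcont.continuousOn
    have hTo : T.OrdConnected := hpc.ordConnected
    have hgxT : g x ∈ T := Set.mem_image_of_mem g (mem_connectedComponentIn hxF)
    have hgyT : g y ∈ T := Set.mem_image_of_mem g hconn
    have h0T : (0:ℝ) ∉ T := by
      rintro ⟨zc, hzc, hgzc⟩
      exact gne zc (connectedComponentIn_subset _ _ hzc) hgzc
    have hgx0 : g x ≠ 0 := gne x hxF
    have hgy0 : g y ≠ 0 := gne y hyF
    rcases hgx0.lt_or_gt with hx0 | hx0 <;> rcases hgy0.lt_or_gt with hy0 | hy0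
    · exact mul_pos_of_neg_of_neg hx0 hy0
    · exact absurd (hTo.out hgxT hgyT ⟨hx0.le, hy0.le⟩) h0T
    · exact absurd (hTo.out hgyT hgxT ⟨hy0.le, hx0.le⟩) h0T
    · exact mul_pos hx0 hy0
  -- affine span of `range (snoc p y)` is the big span
  set qy : Fin (k+2) → Euc d := Fin.snoc p y with hqydef
  set qx : Fin (k+2) → Euc d := Fin.snoc p x with hqxdef
  have hrangey : Set.range qy = Set.range p ∪ {y} := my_range_snoc p y
  have hrangex : Set.range qx = Set.range p ∪ {x} := my_range_snoc p x
  have hsuby : Set.range qy ⊆ S ∪ {x, y} := by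
    rw [hrangey]
    apply Set.union_subset (hpS.trans Set.subset_union_left)
    intro z hz
    rw [Set.mem_singleton_iff] at hz
    exact Set.mem_union_right _ (by simp [hz])
  have hyqy : y ∈ Set.range qy := ⟨Fin.last (k+1), by simp [hqydef]⟩
  have hHy : affineSpan ℝ (Set.range qy) = affineSpan ℝ (S ∪ {x, y}) := by
    apply AffineSubspace.ext_of_direction_eq
    · apply Submodule.eq_of_le_of_finrank_eq
      · exact AffineSubspace.direction_le (affineSpan_mono ℝ hsuby)
      · rw [direction_affineSpan, direction_affineSpan, hdim,
          hqy.finrank_vectorSpan (Fintype.card_fin _)]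
    · exact ⟨y, subset_affineSpan ℝ _ hyqy,
        subset_affineSpan ℝ _ (Set.mem_union_right _ (by simp))⟩
  have hxHy : x ∈ affineSpan ℝ (Set.range qy) := by
    rw [hHy]
    exact hxF.1
  obtain ⟨c, hc1, hxc⟩ := eq_affineCombination_of_mem_affineSpan_of_fintype hxHy
  have hxsum : x = ∑ i, c i • qy i := by
    rw [hxc, Finset.univ.affineCombination_eq_linear_combination qy c hc1]
  -- g x = c last * g y
  have hgy_eq : g y = ⟪n0, y - p 0⟫ := rfl
  have hgx : g x = c (Fin.last (k+1)) * g y := by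
    have hxsub : x - p 0 = ∑ i, c i • (qy i - p 0) := by
      rw [Finset.sum_congr rfl (fun i _ => smul_sub (c i) (qy i) (p 0)), Finset.sum_sub_distrib,
        ← Finset.sum_smul, hc1, one_smul, ← hxsum]
    show ⟪n0, x - p 0⟫ = _
    rw [hxsub, inner_sum, Fin.sum_univ_castSucc]
    have hz : ∀ j : Fin (k+1), ⟪n0, c j.castSucc • (qy j.castSucc - p 0)⟫ = 0 := by
      intro j
      rw [real_inner_smul_right]
      have hj : qy j.castSucc = p j := by simp [hqydef]
      rw [hj]
      have hj0 := ga (p j) (subset_affineSpan ℝ S (hpS (Set.mem_range_self j)))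
      rw [show g (p j) = ⟪n0, p j - p 0⟫ from rfl] at hj0
      rw [hj0, mul_zero]
    rw [Finset.sum_congr rfl (fun j _ => hz j), Finset.sum_const_zero, zero_add,
      real_inner_smul_right, show qy (Fin.last (k+1)) = y from by simp [hqydef], hgy_eq]
  have hclast : 0 < c (Fin.last (k+1)) := by
    by_contra h
    push_neg at h
    rw [hgx] at hsign
    nlinarith [mul_self_nonneg (g y)]
  -- the weights
  set M : ℝ := 1 + ∑ i, |c i| with hM
  have hM1 : 1 ≤ M := le_add_of_nonneg_right (Finset.sum_nonneg fun i _ => abs_nonneg _)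
  have hcM : ∀ i, |c i| ≤ M - 1 := by
    intro i
    have := Finset.single_le_sum (f := fun j => |c j|) (fun j _ => abs_nonneg _)
      (Finset.mem_univ i)
    rw [hM]
    linarith
  set K : ℝ := (k : ℝ) + 1 with hK
  have hK1 : 1 ≤ K := by
    rw [hK]
    linarith [Nat.cast_nonneg (α := ℝ) k]
  have hK0 : 0 < K := by linarith
  set t : ℝ := 1 / (2 * K * M) with ht
  have ht0 : 0 < t := by
    rw [ht]
    apply one_div_pos.mpr
    nlinarith
  have htK : t * (2 * K * M) = 1 := by
    rw [ht]
    field_simp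
  have hKM : 1 ≤ K * M := by
    nlinarith [mul_nonneg (by linarith : (0:ℝ) ≤ K - 1) (by linarith : (0:ℝ) ≤ M - 1)]
  have ht2 : t ≤ 1/2 := by
    nlinarith [htK, mul_nonneg ht0.le (by linarith : (0:ℝ) ≤ K*M - 1)]
  have ht1 : t < 1 := lt_of_le_of_lt ht2 (by norm_num)
  have hA0 : 0 < (1 - t)/K := div_pos (by linarith) hK0
  have hKt : 0 < K * t := mul_pos hK0 ht0
  have hposy : ∀ r : ℝ, |r| ≤ M - 1 → 0 < (1 - t)/K + t * r := by
    intro r hr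
    have hge : 0 ≤ r + (M - 1) := by
      have := neg_abs_le r
      linarith
    have hmain : 0 < (1 - t) + K * (t * r) := by
      nlinarith [mul_nonneg hKt.le hge, mul_nonneg ht0.le (by linarith : (0:ℝ) ≤ K - 1)]
    have : (1 - t)/K + t * r = ((1 - t) + K * (t * r))/K := by
      field_simp
    rw [this]
    exact div_pos hmain hK0
  set wx : Fin (k+2) → ℝ := Fin.snoc (fun _ => (1 - t)/K) t with hwx
  set wy : Fin (k+2) → ℝ :=
    Fin.snoc (fun j => (1 - t)/K + t * c j.castSucc) (t * c (Fin.last (k+1))) with hwy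
  have hwx0 : ∀ i, 0 < wx i := by
    intro i
    induction i using Fin.lastCases with
    | last => simpa [hwx] using ht0
    | cast j => simpa [hwx] using hA0
  have hwy0 : ∀ i, 0 < wy i := by
    intro i
    induction i using Fin.lastCases with
    | last => simpa [hwy] using mul_pos ht0 hclast
    | cast j => simpa [hwy] using hposy (c j.castSucc) (hcM j.castSucc)
  have hsumA : ∑ _j : Fin (k+1), (1 - t)/K = 1 - t := by
    rw [Finset.sum_const, Finset.card_univ, Fintype.card_fin, nsmul_eq_mul]
    rw [hK]
    push_cast
    field_simp
  have hwxsum : ∑ i, wx i = 1 := by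
    rw [Fin.sum_univ_castSucc]
    simp only [hwx, Fin.snoc_castSucc, Fin.snoc_last]
    rw [hsumA]
    ring
  have hwysum : ∑ i, wy i = 1 := by
    rw [Fin.sum_univ_castSucc]
    simp only [hwy, Fin.snoc_castSucc, Fin.snoc_last]
    rw [Finset.sum_add_distrib, hsumA, ← Finset.mul_sum]
    have : ∑ j : Fin (k+1), c j.castSucc + c (Fin.last (k+1)) = 1 := by
      rw [← Fin.sum_univ_castSucc]
      exact hc1
    nlinarith [this]
  -- the common point
  have hhullx : convexHull ℝ (S ∪ {x}) = convexHull ℝ (Set.range qx) := by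
    rw [hS, convexHull_convexHull_union_left, hrangex]
  have hhully : convexHull ℝ (S ∪ {y}) = convexHull ℝ (Set.range qy) := by
    rw [hS, convexHull_convexHull_union_left, hrangey]
  have hzeq : ∑ i, wx i • qx i = ∑ i, wy i • qy i := by
    rw [Fin.sum_univ_castSucc (f := fun i => wx i • qx i),
      Fin.sum_univ_castSucc (f := fun i => wy i • qy i)]
    simp only [hwx, hwy, hqxdef, hqydef, Fin.snoc_castSucc, Fin.snoc_last]
    rw [hxsum, Fin.sum_univ_castSucc (f := fun i => c i • qy i)]
    simp only [hqydef, Fin.snoc_castSucc, Fin.snoc_last]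
    rw [smul_add, Finset.smul_sum]
    simp only [smul_smul, add_smul]
    rw [Finset.sum_add_distrib]
    abel
  refine ⟨∑ i, wx i • qx i, ?_, ?_⟩
  · rw [hhullx]
    exact mem_intrinsicInterior_simplex hqx hwx0 hwxsum
  · rw [hhully, hzeq]
    exact mem_intrinsicInterior_simplex hqy hwy0 hwysum
end
end

section
/- Let P be a d-dimensional polytope, F a full flag of P, and i ≤ j indices in [0, d−1]. If F^j denotes the flag obtained from F by applying the flips r_i, r_{i+1}, ..., r_j in order, then F_i is not contained in the j-dimensional face of F^j. -/
open RealInnerProductSpace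

noncomputable section

/-- If `A` is a nonempty exposed face of `P`, `A ⊆ B ⊆ P` and `sdim B ≤ sdim A`,
then `B = A`. -/
lemma exposed_eq_of_subset {d : ℕ} {P A B : Set (Euc d)} (hA : IsExposed ℝ P A)
    (hAne : A.Nonempty) (hAB : A ⊆ B) (hBP : B ⊆ P) (hdim : sdim B ≤ sdim A) : B = A := by
  obtain ⟨l, hl⟩ := hA hAne
  have hspan : vectorSpan ℝ A = vectorSpan ℝ B :=
    Submodule.eq_of_le_of_finrank_le (vectorSpan_mono ℝ hAB) hdim
  obtain ⟨a, ha⟩ := hAne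
  refine Set.Subset.antisymm (fun b hb => ?_) hAB
  have hconst : ∀ x ∈ A, ∀ y ∈ A, l x = l y := by
    intro x hx y hy
    rw [hl] at hx hy
    exact le_antisymm (hy.2 x hx.1) (hx.2 y hy.1)
  have hker : vectorSpan ℝ A ≤ LinearMap.ker (l : Euc d →ₗ[ℝ] ℝ) := by
    rw [vectorSpan]
    apply Submodule.span_le.2
    rintro _ ⟨x, hx, y, hy, rfl⟩
    simp [vsub_eq_sub, hconst x hx y hy]
  have hmem : (b -ᵥ a) ∈ vectorSpan ℝ A := by
    rw [hspan]; exact vsub_mem_vectorSpan ℝ hb (hAB ha)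
  have hlba : l b = l a := by
    have := hker hmem
    simp only [LinearMap.mem_ker, ContinuousLinearMap.coe_coe, vsub_eq_sub, map_sub] at this
    linarith
  rw [hl]
  have haA : a ∈ {x ∈ P | ∀ y ∈ P, l y ≤ l x} := hl ▸ ha
  exact ⟨hBP hb, fun z hz => hlba ▸ haA.2 z hz⟩

/-- Ladder claim: if `F^i = r_i F` and `F^k = r_k F^{k-1}` for `i < k ≤ j` (each flag
differing from the previous one exactly in its `k`-th face), then `F_i ⊄ (F^j)_j`. -/
theorem stmt_6 {d : ℕ} (P : Set (Euc d)) (hP : IsPolytope P) (hPd : sdim P = d)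
    (F : FullFlag P d) (i j : ℕ) (hij : i ≤ j) (hj : j < d)
    (G : ℕ → FullFlag P d)
    (hGi : (G i).face i ≠ F.face i ∧ ∀ m, m ≠ i → (G i).face m = F.face m)
    (hGk : ∀ k, i < k → k ≤ j →
      (G k).face k ≠ (G (k - 1)).face k ∧ ∀ m, m ≠ k → (G k).face m = (G (k - 1)).face m) :
    ¬ F.face i ⊆ (G j).face j := by
  -- Above index `k`, the flag `G k` agrees with `F`.
  have hagree : ∀ k, i ≤ k → k ≤ j → ∀ m, k < m → (G k).face m = F.face m := by
    intro k hik
    induction k, hik using Nat.le_induction with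
    | base => intro _ m hm; exact hGi.2 m (Nat.ne_of_gt hm)
    | succ n hn ih =>
      intro hnj m hm
      have h1 := (hGk (n + 1) (Nat.lt_succ_of_le hn) hnj).2 m (Nat.ne_of_gt hm)
      rw [Nat.add_sub_cancel] at h1
      rw [h1]
      exact ih (Nat.le_of_succ_le hnj) m (Nat.lt_of_succ_lt hm)
  suffices H : ∀ k, i ≤ k → k ≤ j → ¬ F.face i ⊆ (G k).face k from H j hij le_rfl
  intro k hik
  induction k, hik using Nat.le_induction with
  | base =>
    intro _ hsub
    have hid : i < d := lt_of_le_of_lt hij hj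
    exact hGi.1 (exposed_eq_of_subset (F.exposed i hid) (F.nonempty i hid) hsub
      (((G i).exposed i hid).subset)
      (by rw [(G i).dim_eq i hid, F.dim_eq i hid]))
  | succ n hn ih =>
    intro hnj hsub
    have hkd : n + 1 < d := lt_of_le_of_lt hnj hj
    have hnd : n < d := Nat.lt_of_succ_lt hkd
    have IH := ih (Nat.le_of_succ_le hnj)
    have hfk : (G n).face (n + 1) = F.face (n + 1) :=
      hagree n hn (Nat.le_of_succ_le hnj) (n + 1) (Nat.lt_succ_self n)
    have hne : (G (n + 1)).face (n + 1) ≠ F.face (n + 1) := by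
      have h := (hGk (n + 1) (Nat.lt_succ_of_le hn) hnj).1
      rwa [Nat.add_sub_cancel, hfk] at h
    have hGn_eq : (G (n + 1)).face n = (G n).face n := by
      have h := (hGk (n + 1) (Nat.lt_succ_of_le hn) hnj).2 n (by omega)
      rwa [Nat.add_sub_cancel] at h
    set A := (G n).face n with hA
    set H2 := (G (n + 1)).face (n + 1) ∩ F.face (n + 1) with hH2
    have hHexp : IsExposed ℝ P H2 :=
      ((G (n + 1)).exposed (n + 1) hkd).inter (F.exposed (n + 1) hkd)
    have hAH : A ⊆ H2 := by
      apply Set.subset_inter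
      · rw [← hGn_eq]
        exact (G (n + 1)).chain n (n + 1) (Nat.lt_succ_self n) hkd
      · have h := (G n).chain n (n + 1) (Nat.lt_succ_self n) hkd
        rwa [hfk] at h
    have hAne : A.Nonempty := (G n).nonempty n hnd
    have hHP : H2 ⊆ P := hHexp.subset
    by_cases hcase : sdim H2 ≤ n
    · have hHA : H2 = A :=
        exposed_eq_of_subset ((G n).exposed n hnd) hAne hAH hHP
          (by rw [(G n).dim_eq n hnd]; exact hcase)
      apply IH
      rw [← hHA]
      exact Set.subset_inter hsub (F.chain i (n + 1) (by omega) hkd)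
    · push_neg at hcase
      have hFk : F.face (n + 1) = H2 :=
        exposed_eq_of_subset hHexp (hAne.mono hAH) Set.inter_subset_right
          ((F.exposed (n + 1) hkd).subset)
          (by rw [F.dim_eq (n + 1) hkd]; omega)
      apply hne
      apply exposed_eq_of_subset (F.exposed (n + 1) hkd) (F.nonempty (n + 1) hkd)
        (by rw [hFk]; exact Set.inter_subset_left)
        (((G (n + 1)).exposed (n + 1) hkd).subset)
        (by rw [(G (n + 1)).dim_eq (n + 1) hkd, F.dim_eq (n + 1) hkd])
end
end

section
/- Let P be a d-dimensional polytope (with faces of all dimensions) and F a full flag of P. Then there exists a unique facet G of P such that the vertex F_0 is contained in G and the sequence (F_i ∩ G) for i = 1, ..., d is a full flag of G. Moreover G is the (d−1)-face of the flag r_{d-1} r_{d-2} ··· r_1 F. -/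
open RealInnerProductSpace

noncomputable section

/-- `G` is a facet of `P` containing the vertex `F_0` such that `(F_i ∩ G)_{i ∈ [d]}`
is a full flag of `G`. -/
def FacetFlagProp {d : ℕ} (P : Set (Euc d)) (F : FullFlag P d) (G : Set (Euc d)) : Prop :=
  IsExposed ℝ P G ∧ G.Nonempty ∧ sdim G = d - 1 ∧ F.face 0 ⊆ G ∧
    ∃ FG : FullFlag G (d - 1), ∀ i < d - 1, FG.face i = F.face (i + 1) ∩ G

namespace Aux

variable {d : ℕ}

lemma sdim_mono {X Y : Set (Euc d)} (h : X ⊆ Y) : sdim X ≤ sdim Y :=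
  Submodule.finrank_mono (vectorSpan_mono ℝ h)

/-- A nonempty exposed subset is the set of maximizers; characterization with a base point. -/
lemma exposed_char {P X : Set (Euc d)} (hX : IsExposed ℝ P X) {x0 : Euc d} (hx0 : x0 ∈ X) :
    ∃ l : Euc d →L[ℝ] ℝ, (∀ y ∈ P, l y ≤ l x0) ∧ X = {x ∈ P | l x = l x0} := by
  obtain ⟨l, hl⟩ := hX ⟨x0, hx0⟩
  have hx0' := hl ▸ hx0
  refine ⟨l, hx0'.2, ?_⟩
  rw [hl]
  ext x
  constructor
  · rintro ⟨hxP, hx⟩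
    exact ⟨hxP, le_antisymm (hx0'.2 x hxP) (hx x0 hx0'.1)⟩
  · rintro ⟨hxP, hx⟩
    exact ⟨hxP, fun y hy => (hx0'.2 y hy).trans hx.ge⟩

/-- the span of an exposed set is killed by the functional (differences). -/
lemma vectorSpan_le_ker {X : Set (Euc d)} {l : Euc d →L[ℝ] ℝ} {c : ℝ}
    (h : ∀ x ∈ X, l x = c) : vectorSpan ℝ X ≤ LinearMap.ker (l : Euc d →ₗ[ℝ] ℝ) := by
  rw [vectorSpan_def, Submodule.span_le]
  rintro v hv
  rw [Set.mem_vsub] at hv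
  obtain ⟨x, hx, y, hy, rfl⟩ := hv
  simp only [SetLike.mem_coe, LinearMap.mem_ker, vsub_eq_sub]
  show l (x - y) = 0
  rw [map_sub, h x hx, h y hy, sub_self]

lemma exposed_sdim_lt {P X : Set (Euc d)} (hX : IsExposed ℝ P X) (hne : X.Nonempty)
    (hXP : X ≠ P) : sdim X < sdim P := by
  obtain ⟨x0, hx0⟩ := hne
  obtain ⟨l, hmax, hchar⟩ := exposed_char hX hx0
  have hXsub : X ⊆ P := hX.subset
  obtain ⟨a, haP, haX⟩ : ∃ a, a ∈ P ∧ a ∉ X := by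
    by_contra h
    push_neg at h
    exact hXP (hXsub.antisymm h)
  have hal : l a < l x0 := by
    rcases lt_or_eq_of_le (hmax a haP) with h | h
    · exact h
    · exact absurd (hchar ▸ ⟨haP, h⟩) haX
  have hkey : vectorSpan ℝ X ≤ LinearMap.ker (l : Euc d →ₗ[ℝ] ℝ) ⊓ vectorSpan ℝ P := by
    refine le_inf ?_ (vectorSpan_mono ℝ hXsub)
    exact vectorSpan_le_ker (fun x hx => (hchar ▸ hx : _ ∧ _).2)
  have hlt : LinearMap.ker (l : Euc d →ₗ[ℝ] ℝ) ⊓ vectorSpan ℝ P < vectorSpan ℝ P := by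
    refine lt_of_le_of_ne inf_le_right (fun h => ?_)
    have hmem : a - x0 ∈ vectorSpan ℝ P := by
      have := vsub_mem_vectorSpan ℝ haP (hXsub hx0)
      rwa [vsub_eq_sub] at this
    rw [← h] at hmem
    have : l (a - x0) = 0 := hmem.1
    rw [map_sub] at this
    linarith
  calc sdim X ≤ Module.finrank ℝ (LinearMap.ker (l : Euc d →ₗ[ℝ] ℝ) ⊓ vectorSpan ℝ P : Submodule ℝ (Euc d)) :=
        Submodule.finrank_mono hkey
    _ < sdim P := Submodule.finrank_lt_finrank_of_lt hlt

lemma exposed_eq_of_sdim_eq {P X : Set (Euc d)} (hX : IsExposed ℝ P X) (hne : X.Nonempty)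
    (h : sdim X = sdim P) : X = P := by
  by_contra hne'
  exact absurd h (exposed_sdim_lt hX hne hne').ne

lemma sdim_zero_subsingleton {X : Set (Euc d)} (h : sdim X = 0) :
    ∀ x ∈ X, ∀ y ∈ X, x = y := by
  intro x hx y hy
  have : vectorSpan ℝ X = ⊥ := by
    rwa [sdim, Submodule.finrank_eq_zero] at h
  have hm := vsub_mem_vectorSpan ℝ hx hy
  rw [this, Submodule.mem_bot, vsub_eq_sub, sub_eq_zero] at hm
  exact hm


open Classical in
/-- The maximizers of a linear functional on a polytope lie in the hull of maximizing vertices. -/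
lemma argmax_mem_hull {V : Finset (Euc d)} {l : Euc d →L[ℝ] ℝ} {c : ℝ}
    (hVc : ∀ v ∈ V, l v ≤ c) {x : Euc d} (hx : x ∈ convexHull ℝ (V : Set (Euc d)))
    (hxc : l x = c) : x ∈ convexHull ℝ ((V.filter (fun v => l v = c) : Finset (Euc d)) : Set (Euc d)) := by
  rw [Finset.convexHull_eq] at hx
  obtain ⟨w, hw0, hw1, hwx⟩ := hx
  rw [Finset.centerMass_eq_of_sum_1 _ _ hw1] at hwx
  simp only [id_eq] at hwx
  have hlx : ∑ v ∈ V, w v * l v = c := by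
    have : l (∑ v ∈ V, w v • v) = ∑ v ∈ V, w v * l v := by
      rw [map_sum]; simp [smul_eq_mul]
    rw [hwx] at this
    rw [← this, hxc]
  have hzero : ∑ v ∈ V, w v * (c - l v) = 0 := by
    have : ∑ v ∈ V, w v * (c - l v) = (∑ v ∈ V, w v) * c - ∑ v ∈ V, w v * l v := by
      rw [Finset.sum_mul, ← Finset.sum_sub_distrib]
      congr 1; ext v; ring
    rw [this, hw1, hlx, one_mul, sub_self]
  have hkey : ∀ v ∈ V, l v ≠ c → w v = 0 := by
    intro v hv hvc
    have h1 := (Finset.sum_eq_zero_iff_of_nonneg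
      (fun i hi => mul_nonneg (hw0 i hi) (sub_nonneg.2 (hVc i hi)))).1 hzero v hv
    rcases mul_eq_zero.1 h1 with h | h
    · exact h
    · exact absurd (by linarith [sub_eq_zero.1 h] : l v = c) hvc
  rw [Finset.convexHull_eq]
  refine ⟨w, fun y hy => hw0 y (Finset.mem_filter.1 hy).1, ?_, ?_⟩
  · rw [Finset.sum_subset (Finset.filter_subset _ _)]
    · exact hw1
    · intro v hv hnv
      exact hkey v hv (by simpa [hv] using hnv)
  · rw [Finset.centerMass_eq_of_sum_1]
    · simp only [id_eq]
      rw [Finset.sum_subset (Finset.filter_subset _ _), hwx]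
      intro v hv hnv
      rw [hkey v hv (by simpa [hv] using hnv), zero_smul]
    · rw [Finset.sum_subset (Finset.filter_subset _ _)]
      · exact hw1
      · intro v hv hnv
        exact hkey v hv (by simpa [hv] using hnv)

/-- all points of the hull are below the max over vertices -/
lemma hull_le_max {V : Finset (Euc d)} {l : Euc d →L[ℝ] ℝ} {c : ℝ}
    (hVc : ∀ v ∈ V, l v ≤ c) : ∀ x ∈ convexHull ℝ (V : Set (Euc d)), l x ≤ c := by
  intro x hx
  have : convexHull ℝ (V : Set (Euc d)) ⊆ {w | l w ≤ c} :=
    convexHull_min (fun v hv => hVc v hv) (convex_halfSpace_le ⟨l.map_add, l.map_smul⟩ c)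
  exact this hx

lemma hull_subset_hyperplane {V : Finset (Euc d)} {l : Euc d →L[ℝ] ℝ} {c : ℝ}
    (hVc : ∀ v ∈ V, l v = c) : ∀ x ∈ convexHull ℝ (V : Set (Euc d)), l x = c := by
  intro x hx
  have : convexHull ℝ (V : Set (Euc d)) ⊆ {w | l w = c} :=
    convexHull_min (fun v hv => hVc v hv) (convex_hyperplane ⟨l.map_add, l.map_smul⟩ c)
  exact this hx

open Classical in
/-- An exposed nonempty subset of a polytope is a polytope: it's the hull of vertex maximizers. -/
lemma exposed_hull_eq {V : Finset (Euc d)} {P X : Set (Euc d)}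
    (hPV : P = convexHull ℝ (V : Set (Euc d))) (hX : IsExposed ℝ P X)
    {x0 : Euc d} (hx0 : x0 ∈ X) {l : Euc d →L[ℝ] ℝ} (hmax : ∀ y ∈ P, l y ≤ l x0)
    (hchar : X = {x ∈ P | l x = l x0}) :
    X = convexHull ℝ ((V.filter (fun v => l v = l x0) : Finset (Euc d)) : Set (Euc d)) := by
  have hVc : ∀ v ∈ V, l v ≤ l x0 := fun v hv => hmax v (hPV ▸ subset_convexHull ℝ _ hv)
  apply Set.Subset.antisymm
  · intro x hx
    rw [hchar] at hx
    exact argmax_mem_hull hVc (hPV ▸ hx.1) hx.2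
  · intro x hx
    rw [hchar]
    constructor
    · rw [hPV]
      exact convexHull_mono (by exact_mod_cast Finset.filter_subset _ _) hx
    · exact hull_subset_hyperplane (fun v hv => (Finset.mem_filter.1 hv).2) x hx

/-- Exposed nonempty subsets of polytopes are polytopes. -/
lemma exposed_isPolytope {P X : Set (Euc d)} (hP : IsPolytope P) (hX : IsExposed ℝ P X)
    (hne : X.Nonempty) : IsPolytope X := by
  obtain ⟨V0, hV0fin, hPV0⟩ := hP
  obtain ⟨x0, hx0⟩ := hne
  obtain ⟨l, hmax, hchar⟩ := exposed_char hX hx0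
  classical
  let V : Finset (Euc d) := hV0fin.toFinset
  have hPV : P = convexHull ℝ (V : Set (Euc d)) := by
    rw [hPV0, Set.Finite.coe_toFinset]
  exact ⟨_, (V.filter (fun v => l v = l x0)).finite_toSet,
    exposed_hull_eq hPV hX hx0 hmax hchar⟩


lemma eq_of_subset_of_sdim_eq {P X Y : Set (Euc d)} (hX : IsExposed ℝ P X)
    (hY : IsExposed ℝ P Y) (hne : X.Nonempty) (hsub : X ⊆ Y) (hdim : sdim X = sdim Y) :
    X = Y :=
  exposed_eq_of_sdim_eq (hX.mono hY.subset hsub) hne hdim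

lemma subset_of_rel {P F1 F2 : Set (Euc d)} {g1 g2 g3 : Euc d → ℝ} {a b c : ℝ}
    (hF1 : F1 = {x ∈ P | g1 x = 0}) (hF2 : F2 = {x ∈ P | g2 x = 0})
    (hneg2 : ∀ x ∈ P, g2 x ≤ 0) (hneg3 : ∀ x ∈ P, g3 x ≤ 0)
    (hrel : ∀ x ∈ P, a * g1 x + b * g2 x + c * g3 x = 0)
    (hb : b < 0) (hc : c ≤ 0) : F1 ⊆ F2 := by
  intro x hx
  rw [hF1] at hx
  obtain ⟨hxP, hx1⟩ := hx
  have h2 : 0 ≤ b * g2 x := by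
    have := mul_nonneg (neg_nonneg.2 hb.le) (neg_nonneg.2 (hneg2 x hxP)); nlinarith
  have h3 : 0 ≤ c * g3 x := by
    have := mul_nonneg (neg_nonneg.2 hc) (neg_nonneg.2 (hneg3 x hxP)); nlinarith
  have := hrel x hxP
  rw [hx1, mul_zero, zero_add] at this
  have hg2 : b * g2 x = 0 := by linarith
  rw [hF2]
  refine ⟨hxP, ?_⟩
  rcases mul_eq_zero.1 hg2 with h | h
  · linarith
  · exact h

/-- Case where the subject coefficient is positive and others nonneg: contradiction. -/
lemma all_zero_of_rel {P F1 : Set (Euc d)} {g1 g2 g3 : Euc d → ℝ} {a b c : ℝ}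
    (hF1 : F1 = {x ∈ P | g1 x = 0})
    (hneg1 : ∀ x ∈ P, g1 x ≤ 0) (hneg2 : ∀ x ∈ P, g2 x ≤ 0) (hneg3 : ∀ x ∈ P, g3 x ≤ 0)
    (hrel : ∀ x ∈ P, a * g1 x + b * g2 x + c * g3 x = 0)
    (ha : 0 < a) (hb : 0 ≤ b) (hc : 0 ≤ c) : F1 = P := by
  rw [hF1]
  apply Set.Subset.antisymm (Set.sep_subset _ _)
  intro x hxP
  refine ⟨hxP, ?_⟩
  have h1 : a * g1 x ≤ 0 := mul_nonpos_of_nonneg_of_nonpos ha.le (hneg1 x hxP)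
  have h2 : b * g2 x ≤ 0 := mul_nonpos_of_nonneg_of_nonpos hb (hneg2 x hxP)
  have h3 : c * g3 x ≤ 0 := mul_nonpos_of_nonneg_of_nonpos hc (hneg3 x hxP)
  have := hrel x hxP
  have ha1 : a * g1 x = 0 := by linarith
  rcases mul_eq_zero.1 ha1 with h | h
  · linarith
  · exact h

/-- Main sign-case analysis, assuming the first coefficient is positive. -/
lemma case_pos {P F1 F2 F3 : Set (Euc d)} {g1 g2 g3 : Euc d → ℝ} {a b c : ℝ}
    (hF1 : F1 = {x ∈ P | g1 x = 0}) (hF2 : F2 = {x ∈ P | g2 x = 0})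
    (hF3 : F3 = {x ∈ P | g3 x = 0})
    (hneg1 : ∀ x ∈ P, g1 x ≤ 0) (hneg2 : ∀ x ∈ P, g2 x ≤ 0) (hneg3 : ∀ x ∈ P, g3 x ≤ 0)
    (hexp1 : IsExposed ℝ P F1) (hexp2 : IsExposed ℝ P F2) (hexp3 : IsExposed ℝ P F3)
    (hne1 : F1.Nonempty) (hne2 : F2.Nonempty) (hne3 : F3.Nonempty)
    (hd12 : sdim F1 = sdim F2) (hd13 : sdim F1 = sdim F3)
    (hF1P : F1 ≠ P)
    (hrel : ∀ x ∈ P, a * g1 x + b * g2 x + c * g3 x = 0)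
    (ha : 0 < a) : F1 = F2 ∨ F1 = F3 ∨ F2 = F3 := by
  rcases lt_trichotomy b 0 with hb | hb | hb
  · rcases le_or_gt c 0 with hc | hc
    · -- a > 0, b < 0, c ≤ 0 : F1 ⊆ F2
      exact Or.inl (eq_of_subset_of_sdim_eq hexp1 hexp2 hne1
        (subset_of_rel hF1 hF2 hneg2 hneg3 hrel hb hc) hd12)
    · -- a > 0, b < 0, c > 0 : subject 2: F2 ⊆ F1
      refine Or.inl (eq_of_subset_of_sdim_eq hexp2 hexp1 hne2 ?_ hd12.symm).symm
      have hrel' : ∀ x ∈ P, (-b) * g2 x + (-a) * g1 x + (-c) * g3 x = 0 :=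
        fun x hx => by linarith [hrel x hx]
      exact subset_of_rel hF2 hF1 hneg1 hneg3 hrel' (by linarith) (by linarith)
  · rcases lt_trichotomy c 0 with hc | hc | hc
    · -- a > 0, b = 0, c < 0 : F1 ⊆ F3
      have hrel' : ∀ x ∈ P, a * g1 x + c * g3 x + b * g2 x = 0 :=
        fun x hx => by linarith [hrel x hx]
      exact Or.inr (Or.inl (eq_of_subset_of_sdim_eq hexp1 hexp3 hne1
        (subset_of_rel hF1 hF3 hneg3 hneg2 hrel' hc (by linarith)) hd13))
    · exact absurd (all_zero_of_rel hF1 hneg1 hneg2 hneg3 hrel ha (by linarith) (by linarith)) hF1P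
    · exact absurd (all_zero_of_rel hF1 hneg1 hneg2 hneg3 hrel ha (by linarith) hc.le) hF1P
  · rcases lt_trichotomy c 0 with hc | hc | hc
    · -- a > 0, b > 0, c < 0 : subject 3: F3 ⊆ F1
      refine Or.inr (Or.inl (eq_of_subset_of_sdim_eq hexp3 hexp1 hne3 ?_ hd13.symm).symm)
      have hrel' : ∀ x ∈ P, (-c) * g3 x + (-a) * g1 x + (-b) * g2 x = 0 :=
        fun x hx => by linarith [hrel x hx]
      exact subset_of_rel hF3 hF1 hneg1 hneg2 hrel' (by linarith) (by linarith)
    · exact absurd (all_zero_of_rel hF1 hneg1 hneg2 hneg3 hrel ha hb.le (by linarith)) hF1P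
    · exact absurd (all_zero_of_rel hF1 hneg1 hneg2 hneg3 hrel ha hb.le hc.le) hF1P


lemma helper3 {V : Type*} [AddCommGroup V] [Module ℝ V] [FiniteDimensional ℝ V]
    (N : Submodule ℝ V)
    (h : Module.finrank ℝ N = 2)
    (v : Fin 3 → V) (hv : ∀ i, v i ∈ N) :
    ∃ g : Fin 3 → ℝ, (∑ i, g i • v i = 0) ∧ ∃ i, g i ≠ 0 := by
  have hnli : ¬ LinearIndependent ℝ (fun i => (⟨v i, hv i⟩ : N)) := by
    intro hli
    have h1 := hli.fintype_card_le_finrank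
    rw [h] at h1
    simp at h1
  obtain ⟨g, hsum, i, hgi⟩ := Fintype.not_linearIndependent_iff.1 hnli
  refine ⟨g, ?_, i, hgi⟩
  have := congrArg (Subtype.val) hsum
  simpa using this

set_option maxHeartbeats 2000000 in
lemma three_facets {P R F1 F2 F3 : Set (Euc d)} {K : ℕ} (hK : 2 ≤ K) (hPdim : sdim P = K)
    (hRne : R.Nonempty) (hRdim : sdim R = K - 2)
    (hexp1 : IsExposed ℝ P F1) (hexp2 : IsExposed ℝ P F2) (hexp3 : IsExposed ℝ P F3)
    (hd1 : sdim F1 = K - 1) (hd2 : sdim F2 = K - 1) (hd3 : sdim F3 = K - 1)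
    (hR1 : R ⊆ F1) (hR2 : R ⊆ F2) (hR3 : R ⊆ F3) :
    F1 = F2 ∨ F1 = F3 ∨ F2 = F3 := by
  obtain ⟨x0, hx0⟩ := hRne
  have hxP : x0 ∈ P := hexp1.subset (hR1 hx0)
  obtain ⟨m1, hmax1, hchar1⟩ := exposed_char hexp1 (hR1 hx0)
  obtain ⟨m2, hmax2, hchar2⟩ := exposed_char hexp2 (hR2 hx0)
  obtain ⟨m3, hmax3, hchar3⟩ := exposed_char hexp3 (hR3 hx0)
  set g1 : Euc d → ℝ := fun x => m1 x - m1 x0 with hg1def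
  set g2 : Euc d → ℝ := fun x => m2 x - m2 x0 with hg2def
  set g3 : Euc d → ℝ := fun x => m3 x - m3 x0 with hg3def
  have hF1' : F1 = {x ∈ P | g1 x = 0} := by
    rw [hchar1]; ext x; simp [hg1def, sub_eq_zero]
  have hF2' : F2 = {x ∈ P | g2 x = 0} := by
    rw [hchar2]; ext x; simp [hg2def, sub_eq_zero]
  have hF3' : F3 = {x ∈ P | g3 x = 0} := by
    rw [hchar3]; ext x; simp [hg3def, sub_eq_zero]
  have hneg1 : ∀ x ∈ P, g1 x ≤ 0 := fun x hx => sub_nonpos.2 (hmax1 x hx)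
  have hneg2 : ∀ x ∈ P, g2 x ≤ 0 := fun x hx => sub_nonpos.2 (hmax2 x hx)
  have hneg3 : ∀ x ∈ P, g3 x ≤ 0 := fun x hx => sub_nonpos.2 (hmax3 x hx)
  have hne1 : F1.Nonempty := ⟨x0, hR1 hx0⟩
  have hne2 : F2.Nonempty := ⟨x0, hR2 hx0⟩
  have hne3 : F3.Nonempty := ⟨x0, hR3 hx0⟩
  have hF1P : F1 ≠ P := fun h => by rw [h, hPdim] at hd1; omega
  have hF2P : F2 ≠ P := fun h => by rw [h, hPdim] at hd2; omega
  have hF3P : F3 ≠ P := fun h => by rw [h, hPdim] at hd3; omega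
  -- linear algebra: find a nontrivial relation among the three functionals on vectorSpan P
  set W : Submodule ℝ (Euc d) := vectorSpan ℝ P with hWdef
  set A : Submodule ℝ (Euc d) := vectorSpan ℝ R with hAdef
  have hAW : A ≤ W := vectorSpan_mono ℝ (hR1.trans hexp1.subset)
  set A' : Submodule ℝ W := A.comap W.subtype with hA'def
  have hA'dim : Module.finrank ℝ A' = K - 2 := by
    rw [← hRdim]
    exact LinearEquiv.finrank_eq (Submodule.comapSubtypeEquivOfLe hAW)
  have hNdim : Module.finrank ℝ A'.dualAnnihilator = 2 := by
    have h1 := Submodule.finrank_quotient_add_finrank A'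
    have h2 : Module.finrank ℝ (W ⧸ A') = Module.finrank ℝ A'.dualAnnihilator :=
      LinearEquiv.finrank_eq (Subspace.quotEquivAnnihilator A')
    have h3 : Module.finrank ℝ W = K := hPdim
    omega
  have hker : ∀ (m : Euc d →L[ℝ] ℝ) (F : Set (Euc d)), F = {x ∈ P | m x = m x0} → R ⊆ F →
      ((m : Euc d →ₗ[ℝ] ℝ).domRestrict W) ∈ A'.dualAnnihilator := by
    intro m F hchar hRF
    rw [Submodule.mem_dualAnnihilator]
    intro w hw
    have hwA : (w : Euc d) ∈ A := hw
    have hAker : A ≤ LinearMap.ker (m : Euc d →ₗ[ℝ] ℝ) := by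
      rw [hAdef]
      exact vectorSpan_le_ker (c := m x0) (fun x hx => ((hchar ▸ hRF hx) : _ ∧ _).2)
    exact hAker hwA
  set ψ1 := ((m1 : Euc d →ₗ[ℝ] ℝ).domRestrict W) with hψ1def
  set ψ2 := ((m2 : Euc d →ₗ[ℝ] ℝ).domRestrict W) with hψ2def
  set ψ3 := ((m3 : Euc d →ₗ[ℝ] ℝ).domRestrict W) with hψ3def
  have hvmem : ∀ i : Fin 3, (![ψ1, ψ2, ψ3]) i ∈ A'.dualAnnihilator := by
    intro i
    fin_cases i
    · exact hker m1 F1 hchar1 hR1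
    · exact hker m2 F2 hchar2 hR2
    · exact hker m3 F3 hchar3 hR3
  obtain ⟨g, hsum, i0, hgi0⟩ := helper3 A'.dualAnnihilator hNdim ![ψ1, ψ2, ψ3] hvmem
  have hrel : ∀ x ∈ P, g 0 * g1 x + g 1 * g2 x + g 2 * g3 x = 0 := by
    intro x hx
    have hmem : x - x0 ∈ W := by
      have := vsub_mem_vectorSpan ℝ hx hxP
      rwa [vsub_eq_sub] at this
    have h0 : g 0 • ψ1 + g 1 • ψ2 + g 2 • ψ3 = 0 := by
      rw [Fin.sum_univ_three] at hsum
      simpa using hsum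
    have h1 := DFunLike.congr_fun h0 (⟨x - x0, hmem⟩ : W)
    simp only [LinearMap.add_apply, LinearMap.smul_apply, LinearMap.zero_apply,
      smul_eq_mul, hψ1def, hψ2def, hψ3def, LinearMap.domRestrict_apply] at h1
    have e1 : (m1 : Euc d →ₗ[ℝ] ℝ) (x - x0) = g1 x := by simp [hg1def, map_sub]
    have e2 : (m2 : Euc d →ₗ[ℝ] ℝ) (x - x0) = g2 x := by simp [hg2def, map_sub]
    have e3 : (m3 : Euc d →ₗ[ℝ] ℝ) (x - x0) = g3 x := by simp [hg3def, map_sub]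
    rw [e1, e2, e3] at h1
    exact h1
  have hd12 : sdim F1 = sdim F2 := by rw [hd1, hd2]
  have hd13 : sdim F1 = sdim F3 := by rw [hd1, hd3]
  have hd23 : sdim F2 = sdim F3 := by rw [hd2, hd3]
  fin_cases i0
  · replace hgi0 : g 0 ≠ 0 := hgi0
    rcases hgi0.lt_or_gt with h | h
    · have hrel' : ∀ x ∈ P, (-(g 0)) * g1 x + (-(g 1)) * g2 x + (-(g 2)) * g3 x = 0 :=
        fun x hx => by linarith [hrel x hx]
      exact case_pos hF1' hF2' hF3' hneg1 hneg2 hneg3 hexp1 hexp2 hexp3 hne1 hne2 hne3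
        hd12 hd13 hF1P hrel' (by linarith)
    · exact case_pos hF1' hF2' hF3' hneg1 hneg2 hneg3 hexp1 hexp2 hexp3 hne1 hne2 hne3
        hd12 hd13 hF1P hrel h
  · replace hgi0 : g 1 ≠ 0 := hgi0
    have hrelp : ∀ x ∈ P, g 1 * g2 x + g 0 * g1 x + g 2 * g3 x = 0 :=
      fun x hx => by linarith [hrel x hx]
    rcases hgi0.lt_or_gt with h | h
    · have hrel' : ∀ x ∈ P, (-(g 1)) * g2 x + (-(g 0)) * g1 x + (-(g 2)) * g3 x = 0 :=
        fun x hx => by linarith [hrel x hx]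
      have := case_pos hF2' hF1' hF3' hneg2 hneg1 hneg3 hexp2 hexp1 hexp3 hne2 hne1 hne3
        hd12.symm hd23 hF2P hrel' (by linarith)
      tauto
    · have := case_pos hF2' hF1' hF3' hneg2 hneg1 hneg3 hexp2 hexp1 hexp3 hne2 hne1 hne3
        hd12.symm hd23 hF2P hrelp h
      tauto
  · replace hgi0 : g 2 ≠ 0 := hgi0
    have hrelp : ∀ x ∈ P, g 2 * g3 x + g 0 * g1 x + g 1 * g2 x = 0 :=
      fun x hx => by linarith [hrel x hx]
    rcases hgi0.lt_or_gt with h | h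
    · have hrel' : ∀ x ∈ P, (-(g 2)) * g3 x + (-(g 0)) * g1 x + (-(g 1)) * g2 x = 0 :=
        fun x hx => by linarith [hrel x hx]
      have := case_pos hF3' hF1' hF2' hneg3 hneg1 hneg2 hexp3 hexp1 hexp2 hne3 hne1 hne2
        hd13.symm hd23.symm hF3P hrel' (by linarith)
      tauto
    · have := case_pos hF3' hF1' hF2' hneg3 hneg1 hneg2 hexp3 hexp1 hexp2 hne3 hne1 hne2
        hd13.symm hd23.symm hF3P hrelp h
      tauto


open Classical in
set_option maxHeartbeats 1000000 in
lemma exists_second_facet {P F' R : Set (Euc d)} {K : ℕ} (hK : 2 ≤ K)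
    (hP : IsPolytope P) (hPdim : sdim P = K)
    (hexpF : IsExposed ℝ P F') (hFdim : sdim F' = K - 1)
    (hexpR : IsExposed ℝ F' R) (hRne : R.Nonempty) (hRdim : sdim R = K - 2) :
    ∃ G : Set (Euc d), IsExposed ℝ P G ∧ G.Nonempty ∧ sdim G = K - 1 ∧ R ⊆ G ∧ G ≠ F' := by
  obtain ⟨V0, hV0fin, hPV0⟩ := hP
  set V : Finset (Euc d) := hV0fin.toFinset with hVdef
  have hPV : P = convexHull ℝ (V : Set (Euc d)) := by rw [hPV0, Set.Finite.coe_toFinset]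
  obtain ⟨x0, hx0⟩ := hRne
  have hxF : x0 ∈ F' := hexpR.subset hx0
  have hxP : x0 ∈ P := hexpF.subset hxF
  obtain ⟨l, hlmax, hlchar⟩ := exposed_char hexpF hxF
  obtain ⟨m, hmmax, hmchar⟩ := exposed_char hexpR hx0
  have hVP : ∀ v ∈ V, (v : Euc d) ∈ P := fun v hv => hPV ▸ subset_convexHull ℝ _ hv
  have hVle : ∀ v ∈ V, l v ≤ l x0 := fun v hv => hlmax v (hVP v hv)
  have hF'P : F' ⊆ P := hexpF.subset
  -- vertices strictly below the maximum of l
  set Vout : Finset (Euc d) := V.filter (fun v => l v < l x0) with hVoutdef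
  have houtne : Vout.Nonempty := by
    rw [Finset.filter_nonempty_iff]
    by_contra hout
    push_neg at hout
    have hall : ∀ v ∈ V, l v = l x0 := fun v hv => le_antisymm (hVle v hv) (hout v hv)
    have hPF : P ⊆ F' := by
      intro x hx
      rw [hlchar]
      exact ⟨hx, hull_subset_hyperplane hall x (hPV ▸ hx)⟩
    have : F' = P := hPF.antisymm hF'P |>.symm
    rw [this, hPdim] at hFdim
    omega
  set t : Euc d → ℝ := fun v => (m v - m x0) / (l x0 - l v) with htdef
  set T : ℝ := Vout.sup' houtne t with hTdef
  obtain ⟨vs, hvs, hvseq⟩ := Finset.exists_mem_eq_sup' houtne t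
  have hvsV : vs ∈ V := (Finset.mem_filter.1 hvs).1
  have hvslt : l vs < l x0 := (Finset.mem_filter.1 hvs).2
  set n : Euc d →L[ℝ] ℝ := m + T • l with hndef
  have napp : ∀ x, n x = m x + T * l x := by
    intro x; simp [hndef]
  -- n is maximized at x0 over P
  have hvert : ∀ v ∈ V, n v ≤ n x0 := by
    intro v hv
    rcases eq_or_lt_of_le (hVle v hv) with h | h
    · have hvF : v ∈ F' := by rw [hlchar]; exact ⟨hVP v hv, h⟩
      have := hmmax v hvF
      rw [napp, napp, h]
      nlinarith
    · have hvout : v ∈ Vout := Finset.mem_filter.2 ⟨hv, h⟩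
      have hTv : t v ≤ T := Finset.le_sup' t hvout
      rw [htdef] at hTv
      simp only at hTv
      rw [div_le_iff₀ (by linarith : (0:ℝ) < l x0 - l v)] at hTv
      rw [napp, napp]
      nlinarith
  have hnmax : ∀ y ∈ P, n y ≤ n x0 := by
    intro y hy
    exact hull_le_max hvert y (hPV ▸ hy)
  set G : Set (Euc d) := {x ∈ P | ∀ y ∈ P, n y ≤ n x} with hGdef
  have hGexp : IsExposed ℝ P G := fun _ => ⟨n, rfl⟩
  have hmemG : ∀ x, x ∈ P → n x = n x0 → x ∈ G :=
    fun x hx he => ⟨hx, fun y hy => (hnmax y hy).trans he.ge⟩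
  have hx0G : x0 ∈ G := hmemG x0 hxP rfl
  have hGchar : ∀ x ∈ G, n x = n x0 := fun x hx =>
    le_antisymm (hnmax x hx.1) (hx.2 x0 hxP)
  have hRF : ∀ x ∈ R, x ∈ F' ∧ m x = m x0 := fun x hx => by rw [hmchar] at hx; exact hx
  have hFl : ∀ x ∈ F', l x = l x0 := fun x hx => ((hlchar ▸ hx) : _ ∧ _).2
  have hRG : R ⊆ G := by
    intro x hx
    obtain ⟨hxF', hxm⟩ := hRF x hx
    refine hmemG x (hF'P hxF') ?_
    rw [napp, napp, hxm, hFl x hxF']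
  -- vs is in G
  have hvsG : vs ∈ G := by
    refine hmemG vs (hVP vs hvsV) ?_
    have hTeq : T = (m vs - m x0) / (l x0 - l vs) := hvseq
    have : T * (l x0 - l vs) = m vs - m x0 := by
      rw [hTeq, div_mul_cancel₀]
      linarith
    rw [napp, napp]
    nlinarith
  have hGneF : G ≠ F' := by
    intro h
    have : vs ∈ F' := h ▸ hvsG
    have := hFl vs this
    linarith
  -- there is a vertex of F' with m strictly below the max: G ≠ P
  have hv1 : ∃ v1 ∈ V, l v1 = l x0 ∧ m v1 < m x0 := by
    by_contra hno
    push_neg at hno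
    have hsub : F' ⊆ R := by
      intro x hx
      have hxmem : x ∈ P ∧ l x = l x0 := by rw [hlchar] at hx; exact hx
      have hhull := argmax_mem_hull hVle (hPV ▸ hxmem.1) hxmem.2
      have hfiltm : ∀ v ∈ V.filter (fun v => l v = l x0), m v = m x0 := by
        intro v hv
        obtain ⟨hvV, hvl⟩ := Finset.mem_filter.1 hv
        have hvF : v ∈ F' := by rw [hlchar]; exact ⟨hVP v hvV, hvl⟩
        exact le_antisymm (hmmax v hvF) (hno v hvV hvl)
      have hxm : m x = m x0 := hull_subset_hyperplane hfiltm x hhull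
      rw [hmchar]
      exact ⟨hx, hxm⟩
    have := sdim_mono hsub
    rw [hFdim, hRdim] at this
    omega
  obtain ⟨v1, hv1V, hv1l, hv1m⟩ := hv1
  have hGneP : G ≠ P := by
    intro h
    have hv1G : v1 ∈ G := h ▸ hVP v1 hv1V
    have := hGchar v1 hv1G
    rw [napp, napp, hv1l] at this
    linarith
  -- dimension count
  have hup : sdim G < K := by
    rw [← hPdim]
    exact exposed_sdim_lt hGexp ⟨x0, hx0G⟩ hGneP
  have hlow : K - 2 < sdim G := by
    have hAker : vectorSpan ℝ R ≤ LinearMap.ker (l : Euc d →ₗ[ℝ] ℝ) :=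
      vectorSpan_le_ker (c := l x0) (fun x hx => hFl x (hRF x hx).1)
    have hle : vectorSpan ℝ R ≤ vectorSpan ℝ G := vectorSpan_mono ℝ hRG
    have hmem : vs - x0 ∈ vectorSpan ℝ G := by
      have := vsub_mem_vectorSpan ℝ hvsG hx0G
      rwa [vsub_eq_sub] at this
    have hlt : vectorSpan ℝ R < vectorSpan ℝ G := by
      refine lt_of_le_of_ne hle (fun h => ?_)
      rw [← h] at hmem
      have : l (vs - x0) = 0 := hAker hmem
      rw [map_sub] at this
      linarith
    have := Submodule.finrank_lt_finrank_of_lt hlt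
    rw [← hRdim]
    exact this
  refine ⟨G, hGexp, ⟨x0, hx0G⟩, by omega, hRG, hGneF⟩


def PropK {d : ℕ} (P : Set (Euc d)) (k : ℕ) (F : FullFlag P k) (G : Set (Euc d)) : Prop :=
  IsExposed ℝ P G ∧ G.Nonempty ∧ sdim G = k - 1 ∧ F.face 0 ⊆ G ∧
    ∃ FG : FullFlag G (k - 1), ∀ i < k - 1, FG.face i = F.face (i + 1) ∩ G

lemma face_subset {P : Set (Euc d)} {k : ℕ} (F : FullFlag P k) (i : ℕ) : F.face i ⊆ P := by
  rcases lt_or_ge i k with h | h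
  · exact (F.exposed i h).subset
  · rw [F.top i h]

lemma face_mono {P : Set (Euc d)} {k : ℕ} (F : FullFlag P k) {i j : ℕ} (hij : i ≤ j) :
    F.face i ⊆ F.face j := by
  rcases eq_or_lt_of_le hij with rfl | hlt
  · exact subset_rfl
  rcases lt_or_ge j k with hj | hj
  · exact F.chain i j hlt hj
  · rw [F.top j hj]
    exact face_subset F i

def flagRestrict {P : Set (Euc d)} {k : ℕ} (F : FullFlag P k) (j : ℕ) (hj : j ≤ k) :
    FullFlag (F.face j) j where
  face i := if i < j then F.face i else F.face j
  exposed i hi := by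
    simp only [if_pos hi]
    exact (F.exposed i (lt_of_lt_of_le hi hj)).mono (face_subset F j) (face_mono F hi.le)
  nonempty i hi := by
    simp only [if_pos hi]; exact F.nonempty i (lt_of_lt_of_le hi hj)
  dim_eq i hi := by
    simp only [if_pos hi]; exact F.dim_eq i (lt_of_lt_of_le hi hj)
  chain i j' hij hj' := by
    simp only [if_pos (hij.trans hj'), if_pos hj']
    exact F.chain i j' hij (lt_of_lt_of_le hj' hj)
  top i hi := if_neg (not_lt.2 hi)

lemma flagRestrict_face {P : Set (Euc d)} {k : ℕ} (F : FullFlag P k) {j : ℕ} {hj : j ≤ k}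
    {i : ℕ} (h : i < j) : (flagRestrict F j hj).face i = F.face i := if_pos h

def flagTrivial (G : Set (Euc d)) : FullFlag G 0 where
  face _ := G
  exposed i hi := absurd hi (Nat.not_lt_zero i)
  nonempty i hi := absurd hi (Nat.not_lt_zero i)
  dim_eq i hi := absurd hi (Nat.not_lt_zero i)
  chain i j _ hj := absurd hj (Nat.not_lt_zero j)
  top _ _ := rfl

/-- characterization, sufficiency direction -/
lemma char1 {P G R : Set (Euc d)} {k : ℕ} (hk : 2 ≤ k) (F : FullFlag P k)
    (hRexp : IsExposed ℝ (F.face (k-1)) R) (hRne : R.Nonempty) (hRdim : sdim R = k - 2)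
    (hR0 : F.face 0 ⊆ R)
    (hFR : ∃ FR : FullFlag R (k-2), ∀ i < k - 2, FR.face i = F.face (i+1) ∩ R)
    (hGexp : IsExposed ℝ P G) (hGne : G.Nonempty) (hGdim : sdim G = k - 1)
    (hGF : G ≠ F.face (k-1)) (hRG : R ⊆ G) :
    PropK P k F G := by
  refine ⟨hGexp, hGne, hGdim, hR0.trans hRG, ?_⟩
  obtain ⟨FR, hFRface⟩ := hFR
  have hRFk : R ⊆ F.face (k-1) := hRexp.subset
  have hk1 : k - 1 < k := by omega
  have hDexpP : IsExposed ℝ P (F.face (k-1) ∩ G) := (F.exposed (k-1) hk1).inter hGexp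
  have hRD : R ⊆ F.face (k-1) ∩ G := Set.subset_inter hRFk hRG
  have hDne : (F.face (k-1) ∩ G).Nonempty := hRne.mono hRD
  have hDneq : F.face (k-1) ∩ G ≠ F.face (k-1) := by
    intro h
    have hsub : F.face (k-1) ⊆ G := by rw [← h]; exact Set.inter_subset_right
    exact hGF (eq_of_subset_of_sdim_eq (F.exposed (k-1) hk1) hGexp
      (F.nonempty (k-1) hk1) hsub (by rw [F.dim_eq (k-1) hk1, hGdim])).symm
  have hDdim : sdim (F.face (k-1) ∩ G) < k - 1 := by
    have h := exposed_sdim_lt (hDexpP.mono (face_subset F (k-1)) Set.inter_subset_left)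
      hDne hDneq
    rwa [F.dim_eq (k-1) hk1] at h
  have hRDeq : R = F.face (k-1) ∩ G := by
    by_contra hne
    have hRexpD : IsExposed ℝ (F.face (k-1) ∩ G) R := hRexp.mono Set.inter_subset_left hRD
    have := exposed_sdim_lt hRexpD hRne hne
    omega
  -- useful: for i < k - 2, F.face (i+1) ∩ G = FR.face i
  have hkey : ∀ i, i < k - 2 → F.face (i+1) ∩ G = FR.face i := by
    intro i hi
    have h1 : F.face (i+1) ∩ G = F.face (i+1) ∩ (F.face (k-1) ∩ G) := by
      rw [← Set.inter_assoc, Set.inter_eq_self_of_subset_left (face_mono F (by omega))]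
    rw [h1, ← hRDeq, ← hFRface i hi]
  have hkey2 : F.face (k-2+1) ∩ G = R := by
    have harith : k - 2 + 1 = k - 1 := by omega
    rw [harith, ← hRDeq]
  refine ⟨⟨fun i => if i < k-1 then F.face (i+1) ∩ G else G, ?_, ?_, ?_, ?_, ?_⟩,
    fun i hi => by simp only [if_pos hi]⟩
  · intro i hi
    simp only [if_pos hi]
    exact ((F.exposed (i+1) (by omega)).inter hGexp).mono hGexp.subset
      Set.inter_subset_right
  · intro i hi
    simp only [if_pos hi]
    rcases lt_or_ge i (k-2) with h | h
    · rw [hkey i h]; exact FR.nonempty i h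
    · have : i = k - 2 := by omega
      subst this
      rw [hkey2]; exact hRne
  · intro i hi
    simp only [if_pos hi]
    rcases lt_or_ge i (k-2) with h | h
    · rw [hkey i h]; exact FR.dim_eq i h
    · have : i = k - 2 := by omega
      subst this
      rw [hkey2]; exact hRdim
  · intro i j hij hj
    simp only [if_pos hj, if_pos (hij.trans hj)]
    exact Set.inter_subset_inter_left G (face_mono F (by omega))
  · intro i hi
    exact if_neg (not_lt.2 hi)

/-- characterization, necessity direction -/
lemma char2 {P G : Set (Euc d)} {k : ℕ} (hk : 2 ≤ k) (F : FullFlag P k)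
    (hG : PropK P k F G) :
    G ≠ F.face (k-1) ∧
      PropK (F.face (k-1)) (k-1) (flagRestrict F (k-1) (by omega)) (F.face (k-1) ∩ G) := by
  obtain ⟨hGexp, hGne, hGdim, hG0, FG, hFGface⟩ := hG
  have hk1 : k - 1 < k := by omega
  have hk2 : k - 2 < k - 1 := by omega
  have harith : k - 2 + 1 = k - 1 := by omega
  have hR'eq : F.face (k-1) ∩ G = FG.face (k-2) := by
    rw [hFGface (k-2) hk2, harith]
  have hR'ne : (F.face (k-1) ∩ G).Nonempty := hR'eq ▸ FG.nonempty (k-2) hk2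
  have hR'dim : sdim (F.face (k-1) ∩ G) = k - 2 := by
    rw [hR'eq]; exact FG.dim_eq (k-2) hk2
  constructor
  · intro h
    rw [h, Set.inter_self] at hR'dim
    rw [F.dim_eq (k-1) hk1] at hR'dim
    omega
  refine ⟨((F.exposed (k-1) hk1).inter hGexp).mono (face_subset F (k-1))
      Set.inter_subset_left, hR'ne, hR'dim, ?_, ?_⟩
  · rw [flagRestrict_face F (by omega : 0 < k - 1)]
    exact Set.subset_inter (face_mono F (by omega)) hG0
  · -- the flag of F.face(k-1) ∩ G
    have hsubR' : ∀ i, i < k - 2 → FG.face i ⊆ F.face (k-1) ∩ G := by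
      intro i hi
      rw [hFGface i (by omega)]
      exact Set.inter_subset_inter_left G (face_mono F (by omega))
    refine ⟨⟨fun i => if i < k-2 then FG.face i else F.face (k-1) ∩ G, ?_, ?_, ?_, ?_, ?_⟩,
      ?_⟩
    · intro i hi
      have hik : i < k - 2 := hi
      simp only [if_pos hik]
      exact (FG.exposed i (by omega)).mono Set.inter_subset_right (hsubR' i hik)
    · intro i hi
      have hik : i < k - 2 := hi
      simp only [if_pos hik]; exact FG.nonempty i (by omega)
    · intro i hi
      have hik : i < k - 2 := hi
      simp only [if_pos hik]; exact FG.dim_eq i (by omega)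
    · intro i j hij hj
      have hjk : j < k - 2 := hj
      simp only [if_pos hjk, if_pos (hij.trans hjk)]
      exact FG.chain i j hij (by omega)
    · intro i hi
      have hik : ¬ i < k - 2 := not_lt.2 hi
      simp only [if_neg hik]
    · intro i hi
      have hik : i < k - 2 := hi
      show (if i < k - 2 then FG.face i else F.face (k-1) ∩ G) = _
      rw [if_pos hik, flagRestrict_face F (by omega : i + 1 < k - 1), hFGface i (by omega)]
      rw [← Set.inter_assoc, Set.inter_eq_self_of_subset_left (face_mono F (by omega : i + 1 ≤ k - 1))]


lemma base_prop {P : Set (Euc d)} (F : FullFlag P 1) : PropK P 1 F (F.face 0) := by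
  refine ⟨F.exposed 0 one_pos, F.nonempty 0 one_pos, F.dim_eq 0 one_pos, subset_rfl,
    flagTrivial (F.face 0), fun i hi => absurd hi (Nat.not_lt_zero i)⟩

lemma base_uniq {P : Set (Euc d)} (F : FullFlag P 1) {G : Set (Euc d)}
    (hG : PropK P 1 F G) : G = F.face 0 := by
  obtain ⟨hexp, hne, hdim, h0, -⟩ := hG
  obtain ⟨x0, hx0⟩ := F.nonempty 0 one_pos
  have hGs := sdim_zero_subsingleton (hdim : sdim G = 0)
  have hFs := sdim_zero_subsingleton (F.dim_eq 0 one_pos)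
  apply Set.Subset.antisymm
  · intro y hy
    rw [hGs y hy x0 (h0 hx0)]
    exact hx0
  · exact h0

theorem main_thm : ∀ k, 1 ≤ k → ∀ P : Set (Euc d), IsPolytope P → sdim P = k →
    ∀ F : FullFlag P k, ∃! G, PropK P k F G := by
  intro k hk
  induction k, hk using Nat.le_induction with
  | base =>
    intro P hP hPdim F
    exact ⟨F.face 0, base_prop F, fun G hG => base_uniq F hG⟩
  | succ k hk ih =>
    intro P hP hPdim F
    have hkk : k < k + 1 := by omega
    have hP'poly : IsPolytope (F.face k) :=
      exposed_isPolytope hP (F.exposed k hkk) (F.nonempty k hkk)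
    have hP'dim : sdim (F.face k) = k := F.dim_eq k hkk
    obtain ⟨R, hR, hRuniq⟩ := ih (F.face k) hP'poly hP'dim (flagRestrict F k (by omega))
    obtain ⟨hRexp, hRne, hRdim, hR0, FR, hFRf⟩ := hR
    have hk2 : 2 ≤ k + 1 := by omega
    -- existence of the second facet
    obtain ⟨G, hGexp, hGne, hGdim, hRG, hGneF⟩ :=
      exists_second_facet (K := k + 1) hk2 hP hPdim (F.exposed k hkk)
        (by rw [hP'dim]; omega) hRexp hRne (by rw [hRdim]; omega)
    have hR0' : F.face 0 ⊆ R := by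
      rwa [flagRestrict_face F (by omega : 0 < k)] at hR0
    have hFR' : ∃ FRx : FullFlag R (k + 1 - 2), ∀ i < k + 1 - 2, FRx.face i = F.face (i+1) ∩ R := by
      refine ⟨FR, fun i hi => ?_⟩
      rw [← flagRestrict_face F (by omega : i + 1 < k), hFRf i hi]
    have hprop : PropK P (k+1) F G :=
      char1 hk2 F hRexp hRne hRdim hR0' hFR' hGexp hGne hGdim hGneF hRG
    refine ⟨G, hprop, ?_⟩
    intro G' hG'
    obtain ⟨hG'neF, hG'R⟩ := char2 hk2 F hG'
    obtain ⟨-, hGR⟩ := char2 hk2 F hprop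
    have hReq' : F.face k ∩ G' = R := hRuniq _ hG'R
    have hReq : F.face k ∩ G = R := hRuniq _ hGR
    obtain ⟨hG'exp, hG'ne, hG'dim, -, -⟩ := hG'
    have hres := three_facets (K := k + 1) hk2 hPdim hRne (by rw [hRdim]; omega)
      (F.exposed k hkk) hG'exp hGexp (by rw [hP'dim]; omega) (by rw [hG'dim]) (by rw [hGdim])
      hRexp.subset (hReq' ▸ Set.inter_subset_right) (hReq ▸ Set.inter_subset_right)
    rcases hres with h | h | h
    · exact absurd h.symm hG'neF
    · exact absurd h.symm hGneF
    · exact h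


section Part2

variable {P : Set (Euc d)} {F : FullFlag P d} {H : ℕ → FullFlag P d}

lemma flip_untouched (hH0 : H 0 = F)
    (hflip : ∀ k, 1 ≤ k → k < d →
      (H k).face k ≠ (H (k - 1)).face k ∧ ∀ m, m ≠ k → (H k).face m = (H (k - 1)).face m) :
    ∀ j, j < d → ∀ m, j < m → (H j).face m = F.face m := by
  intro j
  induction j with
  | zero => intro _ m _; rw [hH0]
  | succ j ihj =>
    intro hj1 m hm
    have h1 : (H (j+1)).face m = (H j).face m :=
      (hflip (j+1) (by omega) hj1).2 m (by omega)
    rw [h1]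
    exact ihj (by omega) m (by omega)

lemma part2_C (hd : 1 ≤ d) (hH0 : H 0 = F)
    (hflip : ∀ k, 1 ≤ k → k < d →
      (H k).face k ≠ (H (k - 1)).face k ∧ ∀ m, m ≠ k → (H k).face m = (H (k - 1)).face m) :
    ∀ j (hj : j + 1 ≤ d), PropK (F.face (j+1)) (j+1) (flagRestrict F (j+1) hj) ((H j).face j) := by
  intro j
  induction j with
  | zero =>
    intro hj
    have h0d : 0 < d := hd
    rw [hH0]
    refine ⟨(F.exposed 0 h0d).mono (face_subset F 1) (face_mono F (by omega)),
      F.nonempty 0 h0d, F.dim_eq 0 h0d, ?_, flagTrivial (F.face 0),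
      fun i hi => absurd hi (Nat.not_lt_zero i)⟩
    rw [flagRestrict_face F (by omega : 0 < 1)]
  | succ j ihj =>
    intro hj2
    have hj1d : j + 1 < d := by omega
    have hjd : j < d := by omega
    have Cj := ihj (by omega)
    obtain ⟨hRexp, hRne, hRdim, hR0, FR, hFRf⟩ := Cj
    -- transport to the (j+2)-restricted flag
    have hface1 : (flagRestrict F (j+2) hj2).face (j+1) = F.face (j+1) :=
      flagRestrict_face F (by omega)
    have hGsub : (H (j+1)).face (j+1) ⊆ F.face (j+2) := by
      have h1 : (H (j+1)).face (j+1) ⊆ (H (j+1)).face (j+2) := face_mono (H (j+1)) (by omega)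
      rcases lt_or_ge (j+2) d with h | h
      · rw [flip_untouched hH0 hflip (j+1) hj1d (j+2) (by omega)] at h1
        exact h1
      · rw [(H (j+1)).top (j+2) h] at h1
        rw [F.top (j+2) h]
        exact h1
    have hGexp : IsExposed ℝ (F.face (j+2)) ((H (j+1)).face (j+1)) :=
      ((H (j+1)).exposed (j+1) hj1d).mono (face_subset F (j+2)) hGsub
    have hGneq : (H (j+1)).face (j+1) ≠ F.face (j+1) := by
      have h1 := (hflip (j+1) (by omega) hj1d).1
      have h2 : (H j).face (j+1) = F.face (j+1) :=
        flip_untouched hH0 hflip j hjd (j+1) (by omega)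
      have h1' : (H (j+1)).face (j+1) ≠ (H j).face (j+1) := by simpa using h1
      rwa [h2] at h1'
    have hRG : (H j).face j ⊆ (H (j+1)).face (j+1) := by
      have h1 : (H (j+1)).face j = (H j).face j :=
        (hflip (j+1) (by omega) hj1d).2 j (by omega)
      rw [← h1]
      exact face_mono (H (j+1)) (by omega)
    refine char1 (by omega) (flagRestrict F (j+2) hj2) ?_ hRne hRdim ?_ ?_
      hGexp ((H (j+1)).nonempty (j+1) hj1d) ((H (j+1)).dim_eq (j+1) hj1d) ?_ hRG
    · show IsExposed ℝ ((flagRestrict F (j+2) hj2).face (j+1)) ((H j).face j)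
      rw [hface1]
      exact hRexp
    · show (flagRestrict F (j+2) hj2).face 0 ⊆ (H j).face j
      rw [flagRestrict_face F (by omega : 0 < j + 2)]
      rwa [flagRestrict_face F (by omega : 0 < j + 1)] at hR0
    · refine ⟨FR, fun i hi => ?_⟩
      rw [flagRestrict_face F (by omega : i + 1 < j + 2)]
      rw [hFRf i hi, flagRestrict_face F (by omega : i + 1 < j + 1)]
    · show (H (j+1)).face (j+1) ≠ (flagRestrict F (j+2) hj2).face (j+1)
      rw [hface1]
      exact hGneq

end Part2

end Aux

/-- There is a unique facet `G` of `P` containing `F_0` such that `(F_i ∩ G)_i` is a full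
flag of `G`; moreover `G` is the `(d-1)`-face of the flag `r_{d-1} ⋯ r_1 F`. -/
theorem stmt_7 {d : ℕ} (hd : 1 ≤ d) (P : Set (Euc d)) (hP : IsPolytope P) (hPd : sdim P = d)
    (F : FullFlag P d) :
    (∃! G : Set (Euc d), FacetFlagProp P F G) ∧
    ∀ H : ℕ → FullFlag P d, H 0 = F →
      (∀ k, 1 ≤ k → k < d →
        (H k).face k ≠ (H (k - 1)).face k ∧ ∀ m, m ≠ k → (H k).face m = (H (k - 1)).face m) →
      FacetFlagProp P F ((H (d - 1)).face (d - 1)) := by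
  constructor
  · exact Aux.main_thm d hd P hP hPd F
  · intro H hH0 hflip
    by_cases hd1 : d = 1
    · subst hd1
      show Aux.PropK P 1 F ((H 0).face 0)
      rw [hH0]
      exact Aux.base_prop F
    · have hd2 : 2 ≤ d := by omega
      have C := Aux.part2_C hd hH0 hflip (d-2) (by omega)
      have e1 : d - 2 + 1 = d - 1 := by omega
      obtain ⟨hRexp, hRne, hRdim, hR0, FR, hFRf⟩ := C
      rw [e1] at hRexp
      rw [Aux.flagRestrict_face F (by omega : 0 < d - 2 + 1)] at hR0
      show Aux.PropK P d F ((H (d-1)).face (d-1))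
      refine Aux.char1 (k := d) hd2 F hRexp hRne hRdim hR0 ?_ ?_ ?_ ?_ ?_ ?_
      · refine ⟨FR, fun i hi => ?_⟩
        rw [hFRf i hi, Aux.flagRestrict_face F (by omega : i + 1 < d - 2 + 1)]
      · exact (H (d-1)).exposed (d-1) (by omega)
      · exact (H (d-1)).nonempty (d-1) (by omega)
      · exact (H (d-1)).dim_eq (d-1) (by omega)
      · have h1' : (H (d-1)).face (d-1) ≠ (H (d-2)).face (d-1) :=
          (hflip (d-1) (by omega) (by omega)).1
        have h2 : (H (d-2)).face (d-1) = F.face (d-1) :=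
          Aux.flip_untouched hH0 hflip (d-2) (by omega) (d-1) (by omega)
        rwa [h2] at h1'
      · have h1 : (H (d-1)).face (d-2) = (H (d-2)).face (d-2) :=
          (hflip (d-1) (by omega) (by omega)).2 (d-2) (by omega)
        rw [← h1]
        exact Aux.face_mono (H (d-1)) (by omega)
end
end

section
/- Let Φ be a fan in R^d, P a k-dimensional polytope, and F a full flag of P. Then the set of cones C ∈ Φ such that C intersects the relative interior of F_i for every i ∈ [0,k] is closed under pairwise intersection: if C and D both have this property, so does C ∩ D. -/
open RealInnerProductSpace

noncomputable section

/-- A polyhedral cone: the positive span of finitely many vectors. -/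
def IsPolyCone {d : ℕ} (C : Set (Euc d)) : Prop :=
  ∃ (n : ℕ) (v : Fin n → Euc d),
    C = {x | ∃ c : Fin n → ℝ, (∀ i, 0 ≤ c i) ∧ x = ∑ i, c i • v i}

/-- `F` is a face of the cone `C`. -/
def IsConeFace {d : ℕ} (C F : Set (Euc d)) : Prop :=
  ∃ ν : Euc d, (∀ x ∈ C, ⟪ν, x⟫ ≤ 0) ∧ F = {x ∈ C | ⟪ν, x⟫ = 0}

/-- A (complete) fan in `ℝ^d`: a finite family of polyhedral cones covering `ℝ^d` such that
the intersection of any two members is a face of each and is a member of the family. -/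
def IsFan {d : ℕ} (Φ : Finset (Set (Euc d))) : Prop :=
  (∀ C ∈ Φ, IsPolyCone C) ∧
  (⋃₀ (↑Φ : Set (Set (Euc d))) = Set.univ) ∧
  (∀ C ∈ Φ, ∀ D ∈ Φ, IsConeFace C (C ∩ D) ∧ IsConeFace D (C ∩ D) ∧ (C ∩ D) ∈ Φ)


section Aux
open Set

lemma mem_relint_iff {d : ℕ} {s : Set (Euc d)} {x : Euc d} :
    x ∈ intrinsicInterior ℝ s ↔
      x ∈ affineSpan ℝ s ∧ ∃ ε > 0, ∀ r ∈ affineSpan ℝ s, dist r x < ε → r ∈ s := by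
  constructor
  · rintro ⟨y, hy, rfl⟩
    refine ⟨y.2, ?_⟩
    rw [mem_interior_iff_mem_nhds, Metric.mem_nhds_iff] at hy
    obtain ⟨ε, hε, hball⟩ := hy
    refine ⟨ε, hε, fun r hr hdist => ?_⟩
    have : (⟨r, hr⟩ : affineSpan ℝ s) ∈ Metric.ball y ε := by
      simpa [Metric.mem_ball, Subtype.dist_eq] using hdist
    exact hball this
  · rintro ⟨hx, ε, hε, hball⟩
    refine ⟨⟨x, hx⟩, ?_, rfl⟩
    rw [mem_interior_iff_mem_nhds, Metric.mem_nhds_iff]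
    refine ⟨ε, hε, fun r hr => ?_⟩
    exact hball r.1 r.2 (by simpa [Metric.mem_ball, Subtype.dist_eq] using hr)

lemma relint_combo {d : ℕ} {s : Set (Euc d)} (hs : Convex ℝ s) {a x : Euc d} (ha : a ∈ s)
    (hx : x ∈ intrinsicInterior ℝ s) {t : ℝ} (ht0 : 0 < t) (ht1 : t ≤ 1) :
    (1 - t) • a + t • x ∈ intrinsicInterior ℝ s := by
  rw [mem_relint_iff] at hx ⊢
  obtain ⟨hxspan, ε, hε, hball⟩ := hx
  have haspan : a ∈ affineSpan ℝ s := subset_affineSpan ℝ s ha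
  have hzspan : (1 - t) • a + t • x ∈ affineSpan ℝ s := by
    have := AffineSubspace.vadd_mem_of_mem_direction
      (Submodule.smul_mem _ (1 - t) (AffineSubspace.vsub_mem_direction haspan hxspan)) hxspan
    convert this using 1
    simp [vsub_eq_sub, vadd_eq_add]
    module
  refine ⟨hzspan, t * ε, by positivity, fun r hr hdist => ?_⟩
  set z := (1 - t) • a + t • x with hz
  have hr' : x + (1/t) • (r - z) ∈ affineSpan ℝ s := by
    have := AffineSubspace.vadd_mem_of_mem_direction
      (Submodule.smul_mem _ (1/t) (AffineSubspace.vsub_mem_direction hr hzspan)) hxspan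
    convert this using 1
    simp [vsub_eq_sub, vadd_eq_add]
    module
  have hdist' : dist (x + (1/t) • (r - z)) x < ε := by
    rw [dist_eq_norm] at hdist ⊢
    have : x + (1/t) • (r - z) - x = (1/t) • (r - z) := by module
    rw [this, norm_smul]
    rw [show r - z = r - z from rfl] at hdist
    have h1 : ‖(1/t : ℝ)‖ = 1/t := by
      rw [Real.norm_eq_abs, abs_of_pos (by positivity)]
    rw [h1]
    calc (1/t) * ‖r - z‖ < (1/t) * (t * ε) := by
          apply mul_lt_mul_of_pos_left _ (by positivity)
          exact hdist
      _ = ε := by field_simp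
  have hrs : x + (1/t) • (r - z) ∈ s := hball _ hr' hdist'
  have : r = (1 - t) • a + t • (x + (1/t) • (r - z)) := by
    have htne : t ≠ 0 := ne_of_gt ht0
    rw [hz]
    rw [smul_add, smul_smul, mul_one_div, div_self htne, one_smul]
    module
  rw [this]
  exact hs ha hrs (by linarith) ht0.le (by ring)


lemma relint_max_const {d : ℕ} {s : Set (Euc d)} {x : Euc d}
    (hx : x ∈ intrinsicInterior ℝ s) (ℓ : Euc d →L[ℝ] ℝ)
    (hmax : ∀ y ∈ s, ℓ y ≤ ℓ x) : ∀ y ∈ s, ℓ y = ℓ x := by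
  intro y hy
  rw [mem_relint_iff] at hx
  obtain ⟨hxspan, ε, hε, hball⟩ := hx
  by_contra hne
  have hlt : ℓ y < ℓ x := lt_of_le_of_ne (hmax y hy) hne
  set t : ℝ := ε / (2 * (‖x - y‖ + 1)) with ht
  have ht0 : 0 < t := by positivity
  have hr : x + t • (x - y) ∈ affineSpan ℝ s := by
    have := AffineSubspace.vadd_mem_of_mem_direction
      (Submodule.smul_mem _ t (AffineSubspace.vsub_mem_direction hxspan (subset_affineSpan ℝ s hy)))
      hxspan
    convert this using 1
    simp [vsub_eq_sub, vadd_eq_add]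
    abel
  have hdist : dist (x + t • (x - y)) x < ε := by
    rw [dist_eq_norm]
    have : x + t • (x - y) - x = t • (x - y) := by module
    rw [this, norm_smul, Real.norm_eq_abs, abs_of_pos ht0]
    have h1 : ‖x - y‖ < ‖x - y‖ + 1 := by linarith
    have hd : (0:ℝ) < ‖x - y‖ + 1 := by positivity
    calc t * ‖x - y‖ ≤ t * (‖x - y‖ + 1) := by nlinarith
      _ = ε / 2 := by rw [ht]; field_simp
      _ < ε := by linarith
  have hmem : x + t • (x - y) ∈ s := hball _ hr hdist
  have := hmax _ hmem
  simp only [map_add, map_smul, map_sub, smul_eq_mul] at this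
  nlinarith


lemma sdim_zero_subsingleton {d : ℕ} {s : Set (Euc d)}
    (h0 : Module.finrank ℝ (vectorSpan ℝ s) = 0) : s.Subsingleton := by
  intro a ha b hb
  have hbot : vectorSpan ℝ s = ⊥ := Submodule.finrank_eq_zero.mp h0
  have := vsub_mem_vectorSpan ℝ ha hb
  rw [hbot, Submodule.mem_bot] at this
  have h : a - b = 0 := this
  have := sub_eq_zero.mp h
  exact this

lemma IsPolyCone.convex {d : ℕ} {C : Set (Euc d)} (h : IsPolyCone C) : Convex ℝ C := by
  obtain ⟨n, v, rfl⟩ := h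
  rintro x ⟨c, hc, rfl⟩ y ⟨c', hc', rfl⟩ a b ha hb hab
  refine ⟨fun i => a * c i + b * c' i, fun i => add_nonneg (mul_nonneg ha (hc i)) (mul_nonneg hb (hc' i)), ?_⟩
  rw [Finset.smul_sum, Finset.smul_sum, ← Finset.sum_add_distrib]
  congr 1; funext i
  rw [smul_smul, smul_smul, ← add_smul]

set_option maxHeartbeats 2000000 in
lemma flag_step {d j : ℕ} {C D Fj Fj1 P : Set (Euc d)}
    (hCconv : Convex ℝ C) (hDconv : Convex ℝ D) (hFj1conv : Convex ℝ Fj1)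
    (hFjP : Fj ⊆ P) (hFj1P : Fj1 ⊆ P) (hFjFj1 : Fj ⊆ Fj1)
    (hexp : IsExposed ℝ P Fj)
    (hdimj : Module.finrank ℝ (vectorSpan ℝ Fj) = j)
    (hdimj1 : Module.finrank ℝ (vectorSpan ℝ Fj1) = j + 1)
    {x y : Euc d} (hxC : x ∈ C) (hxr : x ∈ intrinsicInterior ℝ Fj1)
    (hyD : y ∈ D) (hyr : y ∈ intrinsicInterior ℝ Fj1)
    {p : Euc d} {δ : ℝ} (hδ : 0 < δ) (hpr : p ∈ intrinsicInterior ℝ Fj)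
    (hball : ∀ r ∈ affineSpan ℝ Fj, dist r p < δ → r ∈ C ∩ D) :
    ∃ q δ', 0 < δ' ∧ q ∈ intrinsicInterior ℝ Fj1 ∧
      ∀ r ∈ affineSpan ℝ Fj1, dist r q < δ' → r ∈ C ∩ D := by
  have hpFj : p ∈ Fj := intrinsicInterior_subset hpr
  have hpP : p ∈ P := hFjP hpFj
  have hpFj1 : p ∈ Fj1 := hFjFj1 hpFj
  obtain ⟨ℓ, hℓ⟩ := hexp ⟨p, hpFj⟩
  have hFjchar : ∀ z, z ∈ Fj ↔ z ∈ P ∧ ∀ w ∈ P, ℓ w ≤ ℓ z := by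
    intro z; rw [hℓ]; exact Iff.rfl
  have hmaxP : ∀ z ∈ P, ℓ z ≤ ℓ p := ((hFjchar p).mp hpFj).2
  have hxFj1 : x ∈ Fj1 := intrinsicInterior_subset hxr
  have hyFj1 : y ∈ Fj1 := intrinsicInterior_subset hyr
  -- strict inequality on the relative interior
  have hlt : ∀ z ∈ intrinsicInterior ℝ Fj1, ℓ z < ℓ p := by
    intro z hz
    rcases lt_or_eq_of_le (hmaxP z (hFj1P (intrinsicInterior_subset hz))) with h | h
    · exact h
    · exfalso
      have hmax' : ∀ w ∈ Fj1, ℓ w ≤ ℓ z := fun w hw => h ▸ hmaxP w (hFj1P hw)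
      have hconst := relint_max_const hz ℓ hmax'
      have hsub : Fj1 ⊆ Fj := by
        intro w hw
        refine (hFjchar w).mpr ⟨hFj1P hw, fun u hu => ?_⟩
        rw [hconst w hw, h]; exact hmaxP u hu
      have := Submodule.finrank_mono (vectorSpan_mono ℝ hsub)
      rw [hdimj, hdimj1] at this
      omega
  have hℓx : ℓ x < ℓ p := hlt x hxr
  have hℓy : ℓ y < ℓ p := hlt y hyr
  -- the kernel fact
  have hℓFj : ∀ z ∈ Fj, ℓ z = ℓ p :=
    fun z hz => le_antisymm (hmaxP z (hFjP hz)) (((hFjchar z).mp hz).2 p hpP)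
  have hVjker : vectorSpan ℝ Fj ≤ LinearMap.ker (ℓ : Euc d →ₗ[ℝ] ℝ) := by
    rw [vectorSpan_def]
    apply Submodule.span_le.mpr
    rintro v hv
    rw [Set.mem_vsub] at hv
    obtain ⟨a, ha, b, hb, rfl⟩ := hv
    simp only [SetLike.mem_coe, LinearMap.mem_ker, ContinuousLinearMap.coe_coe, vsub_eq_sub,
      map_sub]
    rw [hℓFj a ha, hℓFj b hb, sub_self]
  have hVle : vectorSpan ℝ Fj ≤ vectorSpan ℝ Fj1 := vectorSpan_mono ℝ hFjFj1
  have hkerV : ∀ v ∈ vectorSpan ℝ Fj1, ℓ v = 0 → v ∈ vectorSpan ℝ Fj := by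
    have hKle : vectorSpan ℝ Fj ≤ vectorSpan ℝ Fj1 ⊓ LinearMap.ker (ℓ : Euc d →ₗ[ℝ] ℝ) :=
      le_inf hVle hVjker
    have he : x - p ∈ vectorSpan ℝ Fj1 := by
      have := vsub_mem_vectorSpan ℝ hxFj1 hpFj1; rwa [vsub_eq_sub] at this
    have hlt2 : vectorSpan ℝ Fj1 ⊓ LinearMap.ker (ℓ : Euc d →ₗ[ℝ] ℝ) < vectorSpan ℝ Fj1 := by
      refine lt_of_le_of_ne inf_le_left (fun h => ?_)
      have : x - p ∈ LinearMap.ker (ℓ : Euc d →ₗ[ℝ] ℝ) := by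
        have := h.ge he; exact this.2
      simp only [LinearMap.mem_ker, ContinuousLinearMap.coe_coe, map_sub] at this
      linarith [sub_eq_zero.mp this]
    have h1 := Submodule.finrank_lt_finrank_of_lt hlt2
    have h2 := Submodule.finrank_mono hKle
    rw [hdimj1] at h1
    rw [hdimj] at h2
    have heq := Submodule.eq_of_le_of_finrank_le hKle (by omega)
    intro v hv hv0
    rw [heq]
    exact ⟨hv, by simp [LinearMap.mem_ker, hv0]⟩
  -- scalar setup
  set e := x - p with he_def
  set f := y - p with hf_def
  have heV : e ∈ vectorSpan ℝ Fj1 := by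
    have := vsub_mem_vectorSpan ℝ hxFj1 hpFj1; rwa [vsub_eq_sub, ← he_def] at this
  have hfV : f ∈ vectorSpan ℝ Fj1 := by
    have := vsub_mem_vectorSpan ℝ hyFj1 hpFj1; rwa [vsub_eq_sub, ← hf_def] at this
  have hℓe : ℓ e < 0 := by rw [he_def]; rw [map_sub]; linarith
  have hℓf : ℓ f < 0 := by rw [hf_def]; rw [map_sub]; linarith
  have hℓe_ne : ℓ e ≠ 0 := ne_of_lt hℓe
  have hℓf_ne : ℓ f ≠ 0 := ne_of_lt hℓf
  set κ := ℓ e / ℓ f with hκ_def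
  have hκpos : 0 < κ := div_pos_of_neg_of_neg hℓe hℓf
  set w₀ := e - κ • f with hw₀_def
  have hw₀V : w₀ ∈ vectorSpan ℝ Fj1 := by
    rw [hw₀_def]; exact sub_mem heV (Submodule.smul_mem _ _ hfV)
  have hℓw₀ : ℓ w₀ = 0 := by
    rw [hw₀_def, map_sub, map_smul, hκ_def, smul_eq_mul, div_mul_cancel₀ _ hℓf_ne, sub_self]
  have hw₀Vj : w₀ ∈ vectorSpan ℝ Fj := hkerV _ hw₀V hℓw₀
  set μ := min (1/2 : ℝ) (min (δ / (16 * (‖w₀‖ + 1))) (1 / (2*κ + 1))) with hμ_def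
  have hμpos : 0 < μ := by
    refine lt_min (by norm_num) (lt_min (by positivity) (by positivity))
  have hμhalf : μ ≤ 1/2 := min_le_left _ _
  have hw₀pos : (0:ℝ) < ‖w₀‖ + 1 := by positivity
  have hμδ : μ * (‖w₀‖ + 1) ≤ δ / 16 := by
    have h : μ ≤ δ / (16 * (‖w₀‖ + 1)) := by
      rw [hμ_def]; exact (min_le_right _ _).trans (min_le_left _ _)
    rw [le_div_iff₀ (by positivity)] at h
    linarith
  have hμκ : μ * (2*κ + 1) ≤ 1 := by
    have h : μ ≤ 1 / (2*κ + 1) := by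
      rw [hμ_def]; exact (min_le_right _ _).trans (min_le_right _ _)
    rw [le_div_iff₀ (by positivity)] at h
    linarith
  set ν := κ * μ with hν_def
  have hνpos : 0 < ν := mul_pos hκpos hμpos
  have hνhalf : ν ≤ 1/2 := by nlinarith
  set q := p + μ • e with hq_def
  have hqr : q ∈ intrinsicInterior ℝ Fj1 := by
    have h := relint_combo hFj1conv hpFj1 hxr hμpos (by linarith)
    have heq : (1-μ) • p + μ • x = q := by rw [hq_def, he_def]; module
    rwa [heq] at h
  have hqFj1 : q ∈ Fj1 := intrinsicInterior_subset hqr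
  have hqspan : q ∈ affineSpan ℝ Fj1 := subset_affineSpan ℝ _ hqFj1
  have hpCD : p ∈ C ∩ D := hball p (subset_affineSpan ℝ _ hpFj) (by simpa using hδ)
  have hmem_ball : ∀ u : Euc d, u ∈ vectorSpan ℝ Fj → ‖u‖ < δ → p + u ∈ C ∩ D := by
    intro u huV hu
    apply hball
    · have hdir : u ∈ (affineSpan ℝ Fj).direction := by
        rw [direction_affineSpan]; exact huV
      have := AffineSubspace.vadd_mem_of_mem_direction hdir (subset_affineSpan ℝ _ hpFj)
      simpa [vadd_eq_add, add_comm] using this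
    · rw [dist_eq_norm]; simpa using hu
  have hb'CD : p + (μ/(1-ν)) • w₀ ∈ C ∩ D := by
    apply hmem_ball _ (Submodule.smul_mem _ _ hw₀Vj)
    rw [norm_smul, Real.norm_eq_abs, abs_of_pos (div_pos hμpos (by linarith : (0:ℝ) < 1-ν))]
    have h2 : μ/(1-ν) ≤ 2*μ := by rw [div_le_iff₀ (by linarith)]; nlinarith
    have h3 := mul_le_mul_of_nonneg_right h2 (norm_nonneg w₀)
    have h4 : μ * ‖w₀‖ ≤ μ * (‖w₀‖+1) :=
      mul_le_mul_of_nonneg_left (by linarith) hμpos.le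
    linarith
  have hqD : q ∈ D := by
    have hne : (1:ℝ) - ν ≠ 0 := by linarith
    have heq : q = (1-ν) • (p + (μ/(1-ν)) • w₀) + ν • y := by
      have hc : (1-ν) * (μ/(1-ν)) = μ := by field_simp
      rw [smul_add, smul_smul, hc, hq_def, hν_def, hw₀_def, he_def, hf_def]
      module
    rw [heq]; exact hDconv hb'CD.2 hyD (by linarith) (by linarith) (by ring)
  have hqC : q ∈ C := by
    have heq : q = (1-μ) • p + μ • x := by rw [hq_def, he_def]; module
    rw [heq]; exact hCconv hpCD.1 hxC (by linarith) hμpos.le (by ring)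
  -- the new radius
  set Kt := ‖ℓ‖ / (-ℓ e) with hKt_def
  have hKt0 : 0 ≤ Kt := div_nonneg (norm_nonneg _) (by linarith)
  set Kw := 1 + Kt * ‖e‖ with hKw_def
  have hKw1 : 1 ≤ Kw := by nlinarith [norm_nonneg e]
  set δ' := min (μ / (2 * (Kt + 1))) (min (1 / (4 * (Kt + 1))) (δ / (8 * (Kw + 1)))) with hδ'_def
  have hδ'pos : 0 < δ' := by
    refine lt_min (by positivity) (lt_min (by positivity) (by positivity))
  have hδ'1 : δ' * (2 * (Kt + 1)) ≤ μ := by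
    have h : δ' ≤ μ / (2 * (Kt + 1)) := by rw [hδ'_def]; exact min_le_left _ _
    rw [le_div_iff₀ (by positivity)] at h; linarith
  have hδ'2 : δ' * (4 * (Kt + 1)) ≤ 1 := by
    have h : δ' ≤ 1 / (4 * (Kt + 1)) := by
      rw [hδ'_def]; exact (min_le_right _ _).trans (min_le_left _ _)
    rw [le_div_iff₀ (by positivity)] at h; linarith
  have hδ'3 : δ' * (8 * (Kw + 1)) ≤ δ := by
    have h : δ' ≤ δ / (8 * (Kw + 1)) := by
      rw [hδ'_def]; exact (min_le_right _ _).trans (min_le_right _ _)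
    rw [le_div_iff₀ (by positivity)] at h; linarith
  refine ⟨q, δ', hδ'pos, hqr, ?_⟩
  intro r hrspan hdist
  have hvV : r - q ∈ vectorSpan ℝ Fj1 := by
    have := AffineSubspace.vsub_mem_direction hrspan hqspan
    rwa [direction_affineSpan, vsub_eq_sub] at this
  set v := r - q with hv_def
  set t := ℓ v / ℓ e with ht_def
  have hvnorm : ‖v‖ < δ' := by rw [hv_def, ← dist_eq_norm]; exact hdist
  have habs : |t| ≤ ‖v‖ * Kt := by
    rw [ht_def, hKt_def, abs_div, abs_of_neg hℓe, mul_div_assoc']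
    gcongr
    · linarith
    · rw [mul_comm, ← Real.norm_eq_abs]; exact ℓ.le_opNorm v
  have ht_μ : |t| ≤ μ/2 := by nlinarith [abs_nonneg t, norm_nonneg v]
  have ht_quarter : |t| ≤ 1/4 := by nlinarith [abs_nonneg t, norm_nonneg v]
  set w := v - t • e with hw_def
  have hwV : w ∈ vectorSpan ℝ Fj1 := by
    rw [hw_def]; exact sub_mem hvV (Submodule.smul_mem _ _ heV)
  have hℓw : ℓ w = 0 := by rw [hw_def, ht_def, map_sub, map_smul, smul_eq_mul, div_mul_cancel₀ _ hℓe_ne, sub_self]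
  have hwVj : w ∈ vectorSpan ℝ Fj := hkerV _ hwV hℓw
  have hwnorm : ‖w‖ < δ/8 := by
    have h1 : ‖w‖ ≤ ‖v‖ + |t| * ‖e‖ := by
      rw [hw_def]
      refine (norm_sub_le _ _).trans ?_
      rw [norm_smul, Real.norm_eq_abs]
    nlinarith [norm_nonneg v, norm_nonneg e, abs_nonneg t, mul_le_mul_of_nonneg_right habs (norm_nonneg e)]
  have ht_bounds := abs_le.mp ht_μ
  have hs₁l : μ/2 ≤ μ + t := by linarith
  have hs₁u : μ + t ≤ 3/4 := by
    have := abs_le.mp ht_quarter; linarith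
  have hs₁inv : 1 - (μ + t) ≥ 1/4 := by linarith
  have hs₁ne : (1:ℝ) - (μ + t) ≠ 0 := by linarith
  have hinner1 : p + (1/(1-(μ+t))) • w ∈ C ∩ D := by
    apply hmem_ball _ (Submodule.smul_mem _ _ hwVj)
    rw [norm_smul, Real.norm_eq_abs, abs_of_pos (by positivity : (0:ℝ) < 1/(1-(μ+t)))]
    have h4 : 1/(1-(μ+t)) ≤ 4 := by rw [div_le_iff₀ (by linarith)]; linarith
    nlinarith [norm_nonneg w]
  have hrC : r ∈ C := by
    have heq : r = (1-(μ+t)) • (p + (1/(1-(μ+t))) • w) + (μ+t) • x := by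
      have hc : (1-(μ+t)) * (1/(1-(μ+t))) = 1 := by field_simp
      rw [smul_add, smul_smul, hc, one_smul, hw_def, hv_def, hq_def, he_def]
      module
    rw [heq]; exact hCconv hinner1.1 hxC (by linarith) (by linarith) (by ring)
  have hκt : |κ * t| ≤ ν/2 := by
    rw [abs_mul, abs_of_pos hκpos, hν_def]
    nlinarith [abs_nonneg t]
  have hκt' := abs_le.mp hκt
  have hs₂l : ν/2 ≤ ν + κ*t := by linarith
  have hs₂u : ν + κ*t ≤ 3/4 := by linarith
  have hs₂inv : 1 - (ν + κ*t) ≥ 1/4 := by linarith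
  have hs₂ne : (1:ℝ) - (ν + κ*t) ≠ 0 := by linarith
  have hinner2 : p + (1/(1-(ν+κ*t))) • ((μ+t) • w₀ + w) ∈ C ∩ D := by
    apply hmem_ball
    · exact Submodule.smul_mem _ _ (add_mem (Submodule.smul_mem _ _ hw₀Vj) hwVj)
    · rw [norm_smul, Real.norm_eq_abs, abs_of_pos (by positivity : (0:ℝ) < 1/(1-(ν+κ*t)))]
      have h4 : 1/(1-(ν+κ*t)) ≤ 4 := by rw [div_le_iff₀ (by linarith)]; linarith
      have hn : ‖(μ+t) • w₀ + w‖ ≤ (μ+t) * ‖w₀‖ + ‖w‖ := by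
        refine (norm_add_le _ _).trans ?_
        rw [norm_smul, Real.norm_eq_abs, abs_of_pos (by linarith : (0:ℝ) < μ + t)]
      have hw₀b : μ * ‖w₀‖ ≤ δ/16 := by nlinarith [norm_nonneg w₀]
      have hNb : ‖(μ+t) • w₀ + w‖ < δ/4 := by
        linarith [hn, hw₀b, hwnorm,
          mul_le_mul_of_nonneg_right ht_bounds.2 (norm_nonneg w₀)]
      have h5 := mul_le_mul_of_nonneg_right h4 (norm_nonneg ((μ+t) • w₀ + w))
      linarith
  have hrD : r ∈ D := by
    have heq : r = (1-(ν+κ*t)) • (p + (1/(1-(ν+κ*t))) • ((μ+t) • w₀ + w)) + (ν+κ*t) • y := by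
      have hc : (1-(ν+κ*t)) * (1/(1-(ν+κ*t))) = 1 := by field_simp
      rw [smul_add, smul_smul, hc, one_smul, hw_def, hv_def, hq_def, hw₀_def, he_def, hf_def,
        hν_def]
      module
    rw [heq]; exact hDconv hinner2.2 hyD (by linarith) (by linarith) (by ring)
  exact ⟨hrC, hrD⟩


end Aux

/-- The set of cones of a fan meeting the relative interiors of all faces of a full flag
is closed under pairwise intersection. -/
theorem stmt_9 {d k : ℕ} (Φ : Finset (Set (Euc d))) (hΦ : IsFan Φ)
    (P : Set (Euc d)) (hP : IsPolytope P) (hPd : sdim P = k) (F : FullFlag P k)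
    (C D : Set (Euc d)) (hC : C ∈ Φ) (hD : D ∈ Φ)
    (h1 : ∀ i ≤ k, (C ∩ intrinsicInterior ℝ (F.face i)).Nonempty)
    (h2 : ∀ i ≤ k, (D ∩ intrinsicInterior ℝ (F.face i)).Nonempty) :
    ∀ i ≤ k, ((C ∩ D) ∩ intrinsicInterior ℝ (F.face i)).Nonempty := by
  have hCconv : Convex ℝ C := (hΦ.1 C hC).convex
  have hDconv : Convex ℝ D := (hΦ.1 D hD).convex
  have hPconv : Convex ℝ P := by
    obtain ⟨V, -, rfl⟩ := hP; exact convex_convexHull ℝ V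
  have hface_sub : ∀ i ≤ k, F.face i ⊆ P := by
    intro i hi
    rcases lt_or_eq_of_le hi with h | h
    · exact (F.exposed i h).subset
    · rw [F.top i h.ge]
  have hface_dim : ∀ i ≤ k, sdim (F.face i) = i := by
    intro i hi
    rcases lt_or_eq_of_le hi with h | h
    · exact F.dim_eq i h
    · rw [F.top i h.ge, hPd, h]
  have hface_conv : ∀ i ≤ k, Convex ℝ (F.face i) := by
    intro i hi
    rcases lt_or_eq_of_le hi with h | h
    · exact (F.exposed i h).convex hPconv
    · rw [F.top i h.ge]; exact hPconv
  have key : ∀ j, j ≤ k → ∃ p δ, 0 < δ ∧ p ∈ intrinsicInterior ℝ (F.face j) ∧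
      ∀ r ∈ affineSpan ℝ (F.face j), dist r p < δ → r ∈ C ∩ D := by
    intro j
    induction j with
    | zero =>
      intro _
      obtain ⟨z, hzC, hzr⟩ := h1 0 (Nat.zero_le k)
      obtain ⟨z', hz'D, hz'r⟩ := h2 0 (Nat.zero_le k)
      have hz0 : z ∈ F.face 0 := intrinsicInterior_subset hzr
      have hsing : F.face 0 = {z} :=
        (sdim_zero_subsingleton (hface_dim 0 (Nat.zero_le k))).eq_singleton_of_mem hz0
      have hz' : z' = z := by
        have := intrinsicInterior_subset hz'r
        rw [hsing] at this; exact this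
      refine ⟨z, 1, one_pos, hzr, ?_⟩
      intro r hr _
      rw [hsing] at hr
      have hrz : r = z := (AffineSubspace.mem_affineSpan_singleton _ _).mp hr
      exact hrz ▸ ⟨hzC, hz' ▸ hz'D⟩
    | succ j ih =>
      intro hjk1
      have hjk : j < k := hjk1
      obtain ⟨p, δ, hδ, hpr, hball⟩ := ih (Nat.le_of_lt hjk)
      obtain ⟨x, hxC, hxr⟩ := h1 (j+1) hjk1
      obtain ⟨y, hyD, hyr⟩ := h2 (j+1) hjk1
      have hsub : F.face j ⊆ F.face (j+1) := by
        rcases lt_or_eq_of_le hjk1 with h | h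
        · exact F.chain j (j+1) (Nat.lt_succ_self j) h
        · rw [F.top (j+1) h.ge]; exact hface_sub j (Nat.le_of_lt hjk)
      exact flag_step hCconv hDconv (hface_conv (j+1) hjk1) (hface_sub j (Nat.le_of_lt hjk))
        (hface_sub (j+1) hjk1) hsub (F.exposed j hjk) (hface_dim j (Nat.le_of_lt hjk))
        (hface_dim (j+1) hjk1) hxC hxr hyD hyr hδ hpr hball
  intro i hik
  obtain ⟨p, δ, hδ, hpr, hball⟩ := key i hik
  exact ⟨p, ⟨hball p (subset_affineSpan ℝ _ (intrinsicInterior_subset hpr))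
    (by simpa using hδ), hpr⟩⟩
end
end

section
/- A graph is a cograph if and only if it does not contain the path on 4 vertices (P_4) as an induced subgraph. -/
/-- Cographs: single-vertex graphs, complements of cographs, disjoint unions of cographs,
up to isomorphism. -/
inductive IsCograph : {V : Type} → SimpleGraph V → Prop
  | single : IsCograph (⊥ : SimpleGraph Unit)
  | compl {V : Type} {G : SimpleGraph V} : IsCograph G → IsCograph Gᶜ
  | union {V W : Type} {G : SimpleGraph V} {H : SimpleGraph W} :
      IsCograph G → IsCograph H → IsCograph (G ⊕g H)
  | iso {V W : Type} {G : SimpleGraph V} {H : SimpleGraph W} (e : G ≃g H) :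
      IsCograph G → IsCograph H


open SimpleGraph

namespace CographAux

variable {V W : Type} {G : SimpleGraph V}

def HasP4 {V : Type*} (G : SimpleGraph V) : Prop :=
  ∃ a b c d : V, G.Adj a b ∧ G.Adj b c ∧ G.Adj c d ∧
    ¬G.Adj a c ∧ ¬G.Adj a d ∧ ¬G.Adj b d ∧ a ≠ c ∧ a ≠ d ∧ b ≠ d

lemma hasP4_of_emb {H : SimpleGraph W} (f : G ↪g H) : HasP4 G → HasP4 H := by
  rintro ⟨a, b, c, d, h1, h2, h3, n1, n2, n3, e1, e2, e3⟩
  exact ⟨f a, f b, f c, f d, f.map_rel_iff.2 h1, f.map_rel_iff.2 h2, f.map_rel_iff.2 h3,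
    fun h => n1 (f.map_rel_iff.1 h), fun h => n2 (f.map_rel_iff.1 h),
    fun h => n3 (f.map_rel_iff.1 h), f.injective.ne e1, f.injective.ne e2, f.injective.ne e3⟩

lemma hasP4_compl : HasP4 Gᶜ → HasP4 G := by
  rintro ⟨a, b, c, d, h1, h2, h3, n1, n2, n3, e1, e2, e3⟩
  rw [compl_adj] at h1 h2 h3
  have hac : G.Adj a c := by by_contra h; exact n1 ((compl_adj G a c).2 ⟨e1, h⟩)
  have had : G.Adj a d := by by_contra h; exact n2 ((compl_adj G a d).2 ⟨e2, h⟩)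
  have hbd : G.Adj b d := by by_contra h; exact n3 ((compl_adj G b d).2 ⟨e3, h⟩)
  exact ⟨b, d, a, c, hbd, had.symm, hac,
    fun h => h1.2 h.symm, fun h => h2.2 h, fun h => h3.2 h.symm,
    fun h => h1.1 h.symm, h2.1, fun h => h3.1 h.symm⟩

lemma hasP4_iff_emb (G : SimpleGraph V) : HasP4 G ↔ Nonempty (pathGraph 4 ↪g G) := by
  constructor
  · rintro ⟨a, b, c, d, h1, h2, h3, n1, n2, n3, e1, e2, e3⟩
    have hab := h1.ne; have hbc := h2.ne; have hcd := h3.ne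
    refine ⟨⟨⟨![a, b, c, d], ?_⟩, ?_⟩⟩
    · intro i j hij
      fin_cases i <;> fin_cases j <;> simp_all
    · intro i j
      fin_cases i <;> fin_cases j <;>
        norm_num [pathGraph_adj] <;>
        first
          | exact fun h => h.ne rfl
          | exact h1 | exact h1.symm | exact h2 | exact h2.symm | exact h3 | exact h3.symm
          | exact n1 | exact fun h => n1 h.symm | exact n2 | exact fun h => n2 h.symm
          | exact n3 | exact fun h => n3 h.symm
  · rintro ⟨f⟩
    have adj : ∀ i j : Fin 4, (pathGraph 4).Adj i j → G.Adj (f i) (f j) :=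
      fun i j h => f.map_rel_iff.2 h
    have nadj : ∀ i j : Fin 4, ¬(pathGraph 4).Adj i j → ¬G.Adj (f i) (f j) :=
      fun i j h hh => h (f.map_rel_iff.1 hh)
    exact ⟨f 0, f 1, f 2, f 3,
      adj 0 1 (by rw [pathGraph_adj]; decide),
      adj 1 2 (by rw [pathGraph_adj]; decide),
      adj 2 3 (by rw [pathGraph_adj]; decide),
      nadj 0 2 (by rw [pathGraph_adj]; decide),
      nadj 0 3 (by rw [pathGraph_adj]; decide),
      nadj 1 3 (by rw [pathGraph_adj]; decide),
      f.injective.ne (by decide), f.injective.ne (by decide), f.injective.ne (by decide)⟩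

lemma hasP4_sum {H : SimpleGraph W} : HasP4 (G ⊕g H) → HasP4 G ∨ HasP4 H := by
  rintro ⟨a, b, c, d, h1, h2, h3, n1, n2, n3, e1, e2, e3⟩
  rcases a with a | a <;> rcases b with b | b <;> rcases c with c | c <;> rcases d with d | d <;>
    simp_all
  · exact Or.inl ⟨a, b, c, d, h1, h2, h3, n1, n2, n3, e1, e2, e3⟩
  · exact Or.inr ⟨a, b, c, d, h1, h2, h3, n1, n2, n3, e1, e2, e3⟩

end CographAux

namespace CographAux

variable {V W : Type} {G : SimpleGraph V}

lemma common (hP4 : ¬HasP4 G) {v b : V} (p : G.Walk b v) :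
    b ≠ v → ¬G.Adj v b → ∃ a, G.Adj v a ∧ G.Adj a b := by
  induction p with
  | nil => intro h _; exact absurd rfl h
  | @cons b y v hby q ih =>
    intro hbv hvb
    rcases eq_or_ne y v with rfl | hyv
    · exact absurd hby.symm hvb
    by_cases hvy : G.Adj v y
    · exact ⟨y, hvy, hby.symm⟩
    obtain ⟨a, hva, hay⟩ := ih hyv hvy
    by_cases hab : G.Adj a b
    · exact ⟨a, hva, hab⟩
    exact absurd ⟨v, a, y, b, hva, hay, hby.symm, hvy, hvb, hab,
      hyv.symm, hbv.symm, fun h => hvb (h ▸ hva)⟩ hP4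

lemma dagger (hP4 : ¬HasP4 G) {v a b a' : V} (hva : G.Adj v a) (hva' : G.Adj v a')
    (hvb : ¬G.Adj v b) (hbv : b ≠ v) (hab : ¬G.Adj a b) (ha'b : G.Adj a' b) : G.Adj a a' := by
  by_contra h
  refine hP4 ⟨b, a', v, a, ha'b.symm, hva'.symm, hva, ?_, ?_, fun k => h k.symm, hbv, ?_, ?_⟩
  · exact fun k => hvb k.symm
  · exact fun k => hab k.symm
  · rintro rfl; exact hvb hva
  · rintro rfl; exact hab ha'b

lemma exists_p4 [Fintype V] (G : SimpleGraph V) (hG : G.Connected) (hGc : Gᶜ.Connected)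
    (hcard : 1 < Fintype.card V) : HasP4 G := by
  classical
  by_contra hP4
  have hP4c : ¬HasP4 Gᶜ := fun h => hP4 (hasP4_compl h)
  haveI : Nontrivial V := Fintype.one_lt_card_iff_nontrivial.mp hcard
  obtain ⟨v⟩ : Nonempty V := inferInstance
  -- v has a neighbor
  have hA : ∃ a, G.Adj v a := by
    obtain ⟨u, hu⟩ := exists_ne v
    obtain ⟨p⟩ := hG.preconnected v u
    cases p with
    | nil => exact absurd rfl hu
    | cons h q => exact ⟨_, h⟩
  -- the maximizer
  set A : Finset V := Finset.univ.filter (G.Adj v) with hAdef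
  have hAne : A.Nonempty := by
    obtain ⟨a, ha⟩ := hA
    exact ⟨a, by simp [hAdef, ha]⟩
  set f : V → ℕ := fun a =>
    (Finset.univ.filter (fun b => b ≠ v ∧ ¬G.Adj v b ∧ G.Adj a b)).card with hfdef
  obtain ⟨a0, ha0A, hmax⟩ := A.exists_max_image f hAne
  have hva0 : G.Adj v a0 := by simpa [hAdef] using ha0A
  -- b0 : a nonneighbor of v that is also a nonneighbor of a0   (via Gᶜ)
  obtain ⟨b0, hb1, hb2⟩ : ∃ b, Gᶜ.Adj v b ∧ Gᶜ.Adj b a0 := by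
    obtain ⟨p⟩ := hGc.preconnected a0 v
    exact common hP4c p hva0.ne' (by simp [compl_adj, hva0])
  rw [compl_adj] at hb1
  obtain ⟨hvb0ne, hvb0⟩ := hb1
  have hb2' := hb2
  rw [compl_adj] at hb2'
  obtain ⟨hb0a0ne, hb0a0⟩ := hb2'
  -- a' : a common neighbor of v and b0
  obtain ⟨a', hva', ha'b0⟩ : ∃ a, G.Adj v a ∧ G.Adj a b0 := by
    obtain ⟨p⟩ := hG.preconnected b0 v
    exact common hP4 p (Ne.symm hvb0ne) hvb0
  have ha0a' : G.Adj a0 a' :=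
    dagger hP4 hva0 hva' hvb0 (Ne.symm hvb0ne) (fun h => hb0a0 h.symm) ha'b0
  -- every common neighbor of v,a0 in B is also a neighbor of a'
  have key : ∀ b, b ≠ v → ¬G.Adj v b → G.Adj a0 b → G.Adj a' b := by
    intro b hbv hvb hab
    by_contra h
    have hc1 : Gᶜ.Adj v b := (compl_adj G v b).2 ⟨Ne.symm hbv, hvb⟩
    have hc2 : Gᶜ.Adj v b0 := (compl_adj G v b0).2 ⟨hvb0ne, hvb0⟩
    have hc3 : ¬Gᶜ.Adj v a0 := by simp [compl_adj, hva0]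
    have hc4 : ¬Gᶜ.Adj b a0 := by
      rw [compl_adj]; rintro ⟨-, k⟩; exact k hab.symm
    have hbb0 : Gᶜ.Adj b b0 := dagger hP4c hc1 hc2 hc3 hva0.ne' hc4 hb2
    rw [compl_adj] at hbb0
    refine hP4 ⟨b0, a', a0, b, ha'b0.symm, ha0a'.symm, hab, fun k => hb0a0 k, ?_, h, hb0a0ne, ?_, ?_⟩
    · exact fun k => hbb0.2 k.symm
    · exact Ne.symm hbb0.1
    · rintro rfl; exact hvb hva'
  -- contradiction with maximality
  have hsub : insert b0 (Finset.univ.filter (fun b => b ≠ v ∧ ¬G.Adj v b ∧ G.Adj a0 b)) ⊆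
      Finset.univ.filter (fun b => b ≠ v ∧ ¬G.Adj v b ∧ G.Adj a' b) := by
    intro b hb
    rcases Finset.mem_insert.mp hb with rfl | hb
    · simp [Ne.symm hvb0ne, hvb0, ha'b0]
    · simp only [Finset.mem_filter, Finset.mem_univ, true_and] at hb ⊢
      exact ⟨hb.1, hb.2.1, key b hb.1 hb.2.1 hb.2.2⟩
  have hnotmem : b0 ∉ Finset.univ.filter (fun b => b ≠ v ∧ ¬G.Adj v b ∧ G.Adj a0 b) := by
    simp only [Finset.mem_filter, Finset.mem_univ, true_and]
    rintro ⟨-, -, k⟩; exact hb0a0 k.symm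
  have hlt : f a0 < f a' := by
    have := Finset.card_le_card hsub
    rw [Finset.card_insert_of_notMem hnotmem] at this
    simpa [hfdef] using this
  have : f a' ≤ f a0 := hmax a' (by simp [hAdef, hva'])
  omega

end CographAux

namespace CographAux

variable {V W : Type} {G : SimpleGraph V}

lemma split_disconnected (H : SimpleGraph V) (hd : ¬H.Connected) [Nonempty V] :
    ∃ S : Set V, S.Nonempty ∧ Sᶜ.Nonempty ∧ Nonempty ((H.induce S ⊕g H.induce Sᶜ) ≃g H) := by
  classical
  have hp : ¬H.Preconnected := fun h => hd ⟨h⟩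
  obtain ⟨u, w, hw⟩ : ∃ u w, ¬H.Reachable u w := by
    by_contra h; push_neg at h; exact hp h
  set S : Set V := {x | H.Reachable u x} with hSdef
  have hcross : ∀ x y, x ∈ S → y ∈ Sᶜ → ¬H.Adj x y := by
    intro x y hx hy hadj
    exact hy (hx.trans hadj.reachable)
  refine ⟨S, ⟨u, Reachable.refl u⟩, ⟨w, hw⟩, ⟨⟨Equiv.Set.sumCompl S, ?_⟩⟩⟩
  rintro (⟨a, ha⟩ | ⟨a, ha⟩) (⟨b, hb⟩ | ⟨b, hb⟩)
  · simp [SimpleGraph.sum_adj, comap_adj]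
  · exact iff_of_false (hcross a b ha hb) (by simp [SimpleGraph.sum_adj])
  · exact iff_of_false (fun h => hcross b a hb ha h.symm) (by simp [SimpleGraph.sum_adj])
  · simp [SimpleGraph.sum_adj, comap_adj]

lemma not_hasP4_of_isCograph : ∀ {V : Type} {G : SimpleGraph V}, IsCograph G → ¬HasP4 G := by
  intro V G h
  induction h with
  | single =>
    rintro ⟨a, b, c, d, h1, -⟩
    simp at h1
  | compl _ ih => exact fun h => ih (hasP4_compl h)
  | union _ _ ih1 ih2 => exact fun h => (hasP4_sum h).elim ih1 ih2
  | iso e _ ih => exact fun h => ih (hasP4_of_emb e.symm.toEmbedding h)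

lemma cograph_of_not_hasP4 :
    ∀ (n : ℕ) (V : Type) [Fintype V] [Nonempty V] (G : SimpleGraph V),
      Fintype.card V = n → ¬HasP4 G → IsCograph G := by
  intro n
  induction n using Nat.strong_induction_on with
  | _ n ih =>
    intro V _ _ G hcard hG
    classical
    by_cases hlt : 1 < Fintype.card V
    · have main : ∀ K : SimpleGraph V, ¬HasP4 K → ¬K.Connected → IsCograph K := by
        intro K hK hKc
        obtain ⟨S, hS, hS', ⟨e⟩⟩ := split_disconnected K hKc
        haveI : Fintype ↥S := Fintype.ofFinite _
        haveI : Fintype ↥(Sᶜ) := Fintype.ofFinite _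
        haveI : Nonempty ↥S := hS.to_subtype
        haveI : Nonempty ↥(Sᶜ) := hS'.to_subtype
        have c1 : Fintype.card ↥S < n := by
          rw [← hcard]
          obtain ⟨w, hw⟩ := hS'
          exact Fintype.card_lt_of_injective_of_notMem _ Subtype.val_injective
            (b := w) (by rintro ⟨⟨x, hx⟩, rfl⟩; exact hw hx)
        have c2 : Fintype.card ↥(Sᶜ) < n := by
          rw [← hcard]
          obtain ⟨w, hw⟩ := hS
          exact Fintype.card_lt_of_injective_of_notMem _ Subtype.val_injective
            (b := w) (by rintro ⟨⟨x, hx⟩, rfl⟩; exact hx hw)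
        have k1 : IsCograph (K.induce S) :=
          ih _ c1 ↥S (K.induce S) rfl (fun h => hK (hasP4_of_emb (Embedding.induce S) h))
        have k2 : IsCograph (K.induce Sᶜ) :=
          ih _ c2 ↥(Sᶜ) (K.induce Sᶜ) rfl (fun h => hK (hasP4_of_emb (Embedding.induce Sᶜ) h))
        exact IsCograph.iso e (IsCograph.union k1 k2)
      by_cases hc : G.Connected
      · by_cases hcc : Gᶜ.Connected
        · exact absurd (exists_p4 G hc hcc hlt) hG
        · have h := (main Gᶜ (fun h => hG (hasP4_compl h)) hcc).compl
          rwa [compl_compl] at h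
      · exact main G hG hc
    · haveI : Subsingleton V := by
        have := Fintype.card_pos (α := V)
        exact Fintype.card_le_one_iff_subsingleton.mp (by omega)
      have hbot : G = ⊥ := by
        ext x y
        simp only [bot_adj, iff_false]
        exact fun h => G.ne_of_adj h (Subsingleton.elim x y)
      haveI : Unique V := uniqueOfSubsingleton (Classical.arbitrary V)
      have e : (⊥ : SimpleGraph Unit) ≃g (⊥ : SimpleGraph V) :=
        ⟨Equiv.ofUnique Unit V, by simp⟩
      rw [hbot]
      exact IsCograph.iso e IsCograph.single

end CographAux


/-- A (finite, nonempty) graph is a cograph if and only if it does not contain `P_4`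
as an induced subgraph. -/
theorem stmt_17 {V : Type} [Fintype V] [Nonempty V] (G : SimpleGraph V) :
    IsCograph G ↔ IsEmpty (SimpleGraph.pathGraph 4 ↪g G) := by
  constructor
  · intro h
    constructor
    intro f
    exact CographAux.not_hasP4_of_isCograph h ((CographAux.hasP4_iff_emb G).2 ⟨f⟩)
  · intro h
    exact CographAux.cograph_of_not_hasP4 (Fintype.card V) V G rfl
      (fun hp => h.false ((CographAux.hasP4_iff_emb G).1 hp).some)
end
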